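/- arXiv:2004.02013 — 6 statements merged into one kernel-verified Lean document; each statement's English description precedes it below -/
import Mathlib

section
/- A nonempty topological space X is Baire if and only if player I has no winning strategy in the Banach–Mazur game BM(X). -/
/-- Player I's moves in the Banach–Mazur game, as determined by a strategy `σ`
(a function of the list of player II's previous moves) against II's moves `V`. -/
def bmMoves {X : Type*} (σ : List (Set X) → Set X) (V : ℕ → Set X) (n : ℕ) :
    Set X :=
  σ (List.ofFn fun i : Fin n => V i)

/-- Legality of a reply `V` to the previous move `U`: `V` is nonempty open and
`V ⊆ U`. -/
def bmLegal {X : Type*} [TopologicalSpace X] (U V : Set X) : Prop :=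
  IsOpen V ∧ V.Nonempty ∧ V ⊆ U

/-- `σ` is a winning strategy for player I in the Banach–Mazur game `BM(X)`:
it answers every admissible position with a legal move (a nonempty open set
contained in II's last move), and whenever II plays legally throughout,
`⋂ₙ Uₙ = ∅`. -/
def BMWinningI (X : Type*) [TopologicalSpace X] (σ : List (Set X) → Set X) :
    Prop :=
  ∀ V : ℕ → Set X,
    (∀ n, (∀ m < n, bmLegal (bmMoves σ V m) (V m)) →
      bmLegal (if n = 0 then Set.univ else V (n - 1)) (bmMoves σ V n)) ∧
    ((∀ n, bmLegal (bmMoves σ V n) (V n)) → (⋂ n, bmMoves σ V n) = ∅)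

namespace BMaux

open Set

variable {X : Type*} [TopologicalSpace X]

lemma ofFn_getD_eq_take (L : List (Set X)) (m : ℕ) (hm : m ≤ L.length) :
    (List.ofFn fun i : Fin m => L.getD i ∅) = L.take m := by
  apply List.ext_getElem
  · simp [Nat.min_eq_left hm]
  · intro i h1 h2
    have hi : i < L.length := lt_of_lt_of_le (by simpa using h1) hm
    simp only [List.getElem_take, List.getElem_ofFn]
    exact List.getD_eq_getElem _ _ hi

/-- A finite position (list of II's moves) is legal against `σ`. -/
def PosLegal (σ : List (Set X) → Set X) (L : List (Set X)) : Prop :=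
  ∀ i (h : i < L.length), bmLegal (σ (L.take i)) L[i]

lemma step {σ : List (Set X) → Set X} (hσ : BMWinningI X σ) {L : List (Set X)}
    (hL : PosLegal σ L) :
    IsOpen (σ L) ∧ (σ L).Nonempty ∧ ∀ h : L ≠ [], σ L ⊆ L.getLast h := by
  classical
  set V : ℕ → Set X := fun i => L.getD i ∅ with hV
  have hmov : ∀ m ≤ L.length, bmMoves σ V m = σ (L.take m) := by
    intro m hm
    rw [bmMoves, ofFn_getD_eq_take L m hm]
  have h1 := (hσ V).1 L.length (by
    intro m hm
    rw [hmov m hm.le]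
    have hVm : V m = L[m] := List.getD_eq_getElem _ _ hm
    rw [hVm]
    exact hL m hm)
  rw [hmov L.length le_rfl, List.take_length] at h1
  obtain ⟨ho, hne, hsub⟩ := h1
  refine ⟨ho, hne, ?_⟩
  intro h
  have hlen : L.length ≠ 0 := fun hl => h (List.length_eq_zero_iff.mp hl)
  have hlt : L.length - 1 < L.length := Nat.sub_lt (Nat.pos_of_ne_zero hlen) one_pos
  rw [List.getLast_eq_getElem]
  rw [if_neg hlen] at hsub
  have hVm : V (L.length - 1) = L[L.length - 1] := List.getD_eq_getElem _ _ hlt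
  rwa [hVm] at hsub

lemma posLegal_nil (σ : List (Set X) → Set X) : PosLegal σ ([] : List (Set X)) := by
  intro i h
  simp at h

lemma posLegal_append {σ : List (Set X) → Set X} {L : List (Set X)} {V : Set X}
    (hL : PosLegal σ L) (hV : bmLegal (σ L) V) : PosLegal σ (L ++ [V]) := by
  intro i h
  have h' : i < L.length + 1 := by simpa using h
  rcases Nat.lt_or_ge i L.length with hi | hi
  · rw [List.take_append_of_le_length hi.le, List.getElem_append_left hi]
    exact hL i hi
  · have hieq : i = L.length := le_antisymm (Nat.lt_succ_iff.mp h') hi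
    subst hieq
    rw [List.take_left, List.getElem_concat_length rfl]
    exact hV

/-- A good family of replies at position `L`: legal moves whose `σ`-responses are
pairwise disjoint. -/
def GoodFam (σ : List (Set X) → Set X) (L : List (Set X)) (S : Set (Set X)) : Prop :=
  (∀ V ∈ S, bmLegal (σ L) V) ∧
  ∀ V ∈ S, ∀ W ∈ S, V ≠ W → σ (L ++ [V]) ∩ σ (L ++ [W]) = ∅

lemma exists_maxFam (σ : List (Set X) → Set X) (L : List (Set X)) :
    ∃ S, Maximal (GoodFam σ L) S := by
  have := zorn_subset {S : Set (Set X) | GoodFam σ L S} ?_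
  · obtain ⟨m, hm⟩ := this
    exact ⟨m, hm⟩
  · intro c hc hchain
    refine ⟨⋃₀ c, ⟨?_, ?_⟩, fun s hs => subset_sUnion_of_mem hs⟩
    · rintro V ⟨s, hs, hVs⟩
      exact (hc hs).1 V hVs
    · rintro V ⟨s, hs, hVs⟩ W ⟨t, ht, hWt⟩ hVW
      rcases hchain.total hs ht with hst | hts
      · exact (hc ht).2 V (hst hVs) W hWt hVW
      · exact (hc hs).2 V hVs W (hts hWt) hVW

noncomputable def maxFam (σ : List (Set X) → Set X) (L : List (Set X)) : Set (Set X) :=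
  (exists_maxFam σ L).choose

lemma maxFam_spec (σ : List (Set X) → Set X) (L : List (Set X)) :
    Maximal (GoodFam σ L) (maxFam σ L) :=
  (exists_maxFam σ L).choose_spec

/-- The tree of positions, by level. -/
def level (σ : List (Set X) → Set X) : ℕ → Set (List (Set X))
  | 0 => {[]}
  | n + 1 => ⋃ L ∈ level σ n, (fun V => L ++ [V]) '' maxFam σ L

lemma mem_level_succ {σ : List (Set X) → Set X} {n : ℕ} {L' : List (Set X)} :
    L' ∈ level σ (n + 1) ↔ ∃ L ∈ level σ n, ∃ V ∈ maxFam σ L, L ++ [V] = L' := by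
  simp [level]

lemma level_legal {σ : List (Set X) → Set X} (hσ : BMWinningI X σ) :
    ∀ n, ∀ L ∈ level σ n, PosLegal σ L ∧ L.length = n := by
  intro n
  induction n with
  | zero =>
    intro L hL
    rw [level, mem_singleton_iff] at hL
    subst hL
    exact ⟨posLegal_nil σ, rfl⟩
  | succ n ih =>
    intro L' hL'
    obtain ⟨L, hL, V, hV, rfl⟩ := mem_level_succ.mp hL'
    obtain ⟨hleg, hlen⟩ := ih L hL
    have hmove : bmLegal (σ L) V := (maxFam_spec σ L).1.1 V hV
    exact ⟨posLegal_append hleg hmove, by simp [hlen]⟩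

lemma resp_subset {σ : List (Set X) → Set X} (hσ : BMWinningI X σ)
    {L : List (Set X)} {V : Set X} (hL : PosLegal σ L) (hV : bmLegal (σ L) V) :
    σ (L ++ [V]) ⊆ V := by
  have := (step hσ (posLegal_append hL hV)).2.2 (by simp)
  rwa [List.getLast_concat] at this

lemma level_disjoint {σ : List (Set X) → Set X} (hσ : BMWinningI X σ) :
    ∀ n, ∀ L ∈ level σ n, ∀ L' ∈ level σ n, L ≠ L' → σ L ∩ σ L' = ∅ := by
  intro n
  induction n with
  | zero =>
    intro L hL L' hL' hne
    rw [level, mem_singleton_iff] at hL hL'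
    exact absurd (hL.trans hL'.symm) hne
  | succ n ih =>
    intro P hP P' hP' hne
    obtain ⟨L, hL, V, hV, rfl⟩ := mem_level_succ.mp hP
    obtain ⟨L', hL', V', hV', rfl⟩ := mem_level_succ.mp hP'
    have hlegL := (level_legal hσ n L hL).1
    have hlegL' := (level_legal hσ n L' hL').1
    have hmV : bmLegal (σ L) V := (maxFam_spec σ L).1.1 V hV
    have hmV' : bmLegal (σ L') V' := (maxFam_spec σ L').1.1 V' hV'
    by_cases hLL : L = L'
    · subst hLL
      have hVV : V ≠ V' := fun h => hne (by rw [h])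
      exact (maxFam_spec σ L).1.2 V hV V' hV' hVV
    · have h1 : σ (L ++ [V]) ⊆ σ L := (resp_subset hσ hlegL hmV).trans hmV.2.2
      have h2 : σ (L' ++ [V']) ⊆ σ L' := (resp_subset hσ hlegL' hmV').trans hmV'.2.2
      have := ih L hL L' hL' hLL
      exact eq_empty_of_subset_empty (by rw [← this]; exact inter_subset_inter h1 h2)

lemma level_dense {σ : List (Set X) → Set X} (hσ : BMWinningI X σ) :
    ∀ n, ∀ O : Set X, IsOpen O → (O ∩ σ []).Nonempty →
      ∃ L ∈ level σ n, (O ∩ σ L).Nonempty := by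
  intro n
  induction n with
  | zero =>
    intro O hO hOne
    exact ⟨[], by simp [level], hOne⟩
  | succ n ih =>
    intro O hO hOne
    obtain ⟨L, hL, x, hxO, hxσ⟩ := ih O hO hOne
    have hlegL := (level_legal hσ n L hL).1
    have hOσo : IsOpen (O ∩ σ L) := hO.inter (step hσ hlegL).1
    have hmove : bmLegal (σ L) (O ∩ σ L) := ⟨hOσo, ⟨x, hxO, hxσ⟩, inter_subset_right⟩
    set O' : Set X := O ∩ σ L with hO'
    have hrsub : σ (L ++ [O']) ⊆ O' := resp_subset hσ hlegL hmove
    have hrne : (σ (L ++ [O'])).Nonempty := (step hσ (posLegal_append hlegL hmove)).2.1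
    by_cases hcase : ∃ W ∈ maxFam σ L, (σ (L ++ [O']) ∩ σ (L ++ [W])).Nonempty
    · obtain ⟨W, hW, y, hy1, hy2⟩ := hcase
      refine ⟨L ++ [W], mem_level_succ.mpr ⟨L, hL, W, hW, rfl⟩, y, (hrsub hy1).1, hy2⟩
    · push_neg at hcase
      have hemp : ∀ W ∈ maxFam σ L, σ (L ++ [O']) ∩ σ (L ++ [W]) = ∅ := hcase
      have hgood : GoodFam σ L (insert O' (maxFam σ L)) := by
        constructor
        · rintro V (rfl | hV)
          · exact hmove
          · exact (maxFam_spec σ L).1.1 V hV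
        · rintro V (rfl | hV) W (rfl | hW) hVW
          · exact absurd rfl hVW
          · exact hemp W hW
          · rw [inter_comm]; exact hemp V hV
          · exact (maxFam_spec σ L).1.2 V hV W hW hVW
      have hsub := (maxFam_spec σ L).2 hgood (subset_insert _ _)
      have hO'mem : O' ∈ maxFam σ L := hsub (mem_insert _ _)
      have := hemp O' hO'mem
      rw [inter_self] at this
      exact absurd hrne (by rw [this]; exact not_nonempty_empty)

lemma not_winning_of_baire [BaireSpace X] (σ : List (Set X) → Set X) :
    ¬ BMWinningI X σ := by
  classical
  intro hσ
  obtain ⟨hU0o, hU0ne, -⟩ := step hσ (posLegal_nil σ)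
  set G : ℕ → Set X := fun n => (⋃ L ∈ level σ n, σ L) ∪ (closure (σ []))ᶜ with hG
  have hGopen : ∀ n, IsOpen (G n) := by
    intro n
    refine IsOpen.union (isOpen_biUnion ?_) isClosed_closure.isOpen_compl
    intro L hL
    exact (step hσ (level_legal hσ n L hL).1).1
  have hGdense : ∀ n, Dense (G n) := by
    intro n
    rw [dense_iff_inter_open]
    intro O hO hOne
    by_cases hc : (O ∩ σ []).Nonempty
    · obtain ⟨L, hL, y, hyO, hyσ⟩ := level_dense hσ n O hO hc
      exact ⟨y, hyO, Or.inl (mem_biUnion hL hyσ)⟩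
    · rw [not_nonempty_iff_eq_empty] at hc
      obtain ⟨y, hy⟩ := hOne
      refine ⟨y, hy, Or.inr ?_⟩
      intro hyc
      have hσsub : σ [] ⊆ Oᶜ := fun z hz => fun hzO => by
        have : z ∈ O ∩ σ [] := ⟨hzO, hz⟩
        rw [hc] at this; exact this
      have : closure (σ []) ⊆ Oᶜ := closure_minimal hσsub hO.isClosed_compl
      exact this hyc hy
  have hD := dense_iInter_of_isOpen hGopen hGdense
  obtain ⟨x, hx0, hxI⟩ := hD.inter_open_nonempty (σ []) hU0o hU0ne
  have hxG : ∀ n, ∃ L ∈ level σ n, x ∈ σ L := by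
    intro n
    have hxn : x ∈ G n := mem_iInter.mp hxI n
    rcases hxn with h | h
    · simpa using h
    · exact absurd (subset_closure hx0) h
  have huniq : ∀ n, ∀ L ∈ level σ n, ∀ L' ∈ level σ n, x ∈ σ L → x ∈ σ L' → L = L' := by
    intro n L hL L' hL' hx hx'
    by_contra hne
    have := level_disjoint hσ n L hL L' hL' hne
    have : x ∈ (∅ : Set X) := this ▸ mem_inter hx hx'
    exact this
  set Lx : ℕ → List (Set X) := fun n => (hxG n).choose with hLxdef
  have hLx : ∀ n, Lx n ∈ level σ n ∧ x ∈ σ (Lx n) := by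
    intro n
    obtain ⟨h1, h2⟩ := (hxG n).choose_spec
    exact ⟨h1, h2⟩
  have hstep : ∀ n, ∃ V ∈ maxFam σ (Lx n), Lx (n + 1) = Lx n ++ [V] := by
    intro n
    obtain ⟨M, hM, W, hW, hMW⟩ := mem_level_succ.mp (hLx (n + 1)).1
    have hlegM := (level_legal hσ n M hM).1
    have hmW : bmLegal (σ M) W := (maxFam_spec σ M).1.1 W hW
    have hxM : x ∈ σ M := ((resp_subset hσ hlegM hmW).trans hmW.2.2) (hMW ▸ (hLx (n + 1)).2)
    have hMLx : M = Lx n := huniq n M hM (Lx n) (hLx n).1 hxM (hLx n).2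
    exact ⟨W, hMLx ▸ hW, by rw [← hMW, hMLx]⟩
  set V : ℕ → Set X := fun n => (hstep n).choose with hVdef
  have hV : ∀ n, V n ∈ maxFam σ (Lx n) ∧ Lx (n + 1) = Lx n ++ [V n] := by
    intro n
    obtain ⟨h1, h2⟩ := (hstep n).choose_spec
    exact ⟨h1, h2⟩
  have hofFn : ∀ n, (List.ofFn fun i : Fin n => V i) = Lx n := by
    intro n
    induction n with
    | zero =>
      have : Lx 0 ∈ level σ 0 := (hLx 0).1
      rw [level, mem_singleton_iff] at this
      simp [this]
    | succ n ih =>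
      rw [List.ofFn_succ', List.concat_eq_append, (hV n).2]
      congr 1

  have hmoves : ∀ n, bmMoves σ V n = σ (Lx n) := by
    intro n
    rw [bmMoves, hofFn n]
  have hlegalV : ∀ n, bmLegal (bmMoves σ V n) (V n) := by
    intro n
    rw [hmoves n]
    exact (maxFam_spec σ (Lx n)).1.1 (V n) (hV n).1
  have hempty := (hσ V).2 hlegalV
  have : x ∈ ⋂ n, bmMoves σ V n := mem_iInter.mpr fun n => (hmoves n) ▸ (hLx n).2
  rw [hempty] at this
  exact this

lemma winning_of_not_baire (h : ¬ BaireSpace X) :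
    ∃ σ : List (Set X) → Set X, BMWinningI X σ := by
  classical
  have h' : ¬ ∀ f : ℕ → Set X, (∀ n, IsOpen (f n)) → (∀ n, Dense (f n)) →
      Dense (⋂ n, f n) := fun hf => h ⟨hf⟩
  push_neg at h'
  obtain ⟨f, hfo, hfd, hnd⟩ := h'
  rw [dense_iff_inter_open] at hnd
  push_neg at hnd
  obtain ⟨U, hUo, hUne, hUemp⟩ := hnd
  set σ : List (Set X) → Set X := fun L => L.getLastD U ∩ f L.length with hσdef
  have hmoves : ∀ (V : ℕ → Set X) (n : ℕ),
      bmMoves σ V n = (if n = 0 then U else V (n - 1)) ∩ f n := by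
    intro V n
    cases n with
    | zero => simp [bmMoves, hσdef]
    | succ m =>
      rw [bmMoves, hσdef]
      simp only [List.length_ofFn, List.ofFn_succ', List.concat_eq_append,
        List.getLastD_concat]
      simp
  refine ⟨σ, fun V => ⟨?_, ?_⟩⟩
  · intro n hn
    cases n with
    | zero =>
      rw [if_pos rfl, hmoves V 0, if_pos rfl]
      exact ⟨hUo.inter (hfo 0), (hfd 0).inter_open_nonempty U hUo hUne,
        subset_univ _⟩
    | succ m =>
      have hm := hn m (Nat.lt_succ_self m)
      obtain ⟨hVo, hVne, -⟩ := hm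
      rw [if_neg (Nat.succ_ne_zero m), hmoves V (m + 1), if_neg (Nat.succ_ne_zero m)]
      simp only [Nat.add_sub_cancel]
      exact ⟨hVo.inter (hfo (m + 1)), (hfd (m + 1)).inter_open_nonempty _ hVo hVne,
        inter_subset_left⟩
  · intro _
    apply eq_empty_of_subset_empty
    intro x hx
    have hx' := mem_iInter.mp hx
    have hxU : x ∈ U := by
      have := hx' 0
      rw [hmoves V 0, if_pos rfl] at this
      exact this.1
    have hxf : ∀ n, x ∈ f n := by
      intro n
      have := hx' n
      rw [hmoves V n] at this
      exact this.2
    have : x ∈ U ∩ ⋂ n, f n := ⟨hxU, mem_iInter.mpr hxf⟩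
    rw [hUemp] at this
    exact this

end BMaux

/-- Oxtoby's theorem: a nonempty space is Baire iff player I has no winning
strategy in the Banach–Mazur game. -/
theorem baire_iff_no_winning_strategy_BM {X : Type*} [TopologicalSpace X]
    [Nonempty X] :
    BaireSpace X ↔ ¬ ∃ σ : List (Set X) → Set X, BMWinningI X σ := by
  constructor
  · rintro hB ⟨σ, hσ⟩
    exact BMaux.not_winning_of_baire σ hσ
  · intro h
    by_contra hB
    exact h (BMaux.winning_of_not_baire hB)
end

section
/- A topological space X is Menger if and only if player I does not have a winning strategy in the Menger game M(X). -/
/-- A space is Menger if for every sequence of open covers there are finite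
subfamilies whose union is a cover. -/
def Menger (X : Type*) [TopologicalSpace X] : Prop :=
  ∀ U : ℕ → Set (Set X),
    (∀ n, (∀ u ∈ U n, IsOpen u) ∧ ⋃₀ (U n) = Set.univ) →
    ∃ V : ℕ → Set (Set X),
      (∀ n, V n ⊆ U n ∧ (V n).Finite) ∧ ⋃₀ (⋃ n, V n) = Set.univ

/-- Player I's moves (open covers) in the Menger game, as determined by a
strategy `σ` against player II's moves `V` (finite subfamilies). -/
def mMoves {X : Type*} (σ : List (Set (Set X)) → Set (Set X))
    (V : ℕ → Set (Set X)) (n : ℕ) : Set (Set X) :=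
  σ (List.ofFn fun i : Fin n => V i)

/-- `σ` is a winning strategy for player I in the Menger game `M(X)`: it always
plays open covers of `X`, and whenever II responds with finite subfamilies
throughout, their union fails to cover `X`. -/
def MengerWinningI (X : Type*) [TopologicalSpace X]
    (σ : List (Set (Set X)) → Set (Set X)) : Prop :=
  ∀ V : ℕ → Set (Set X),
    (∀ n, (∀ m < n, V m ⊆ mMoves σ V m ∧ (V m).Finite) →
      ((∀ u ∈ mMoves σ V n, IsOpen u) ∧ ⋃₀ (mMoves σ V n) = Set.univ)) ∧
    ((∀ n, V n ⊆ mMoves σ V n ∧ (V n).Finite) → ⋃₀ (⋃ n, V n) ≠ Set.univ)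

namespace MengerHurewiczAux

open Set

open scoped Classical

variable {X : Type*} [TopologicalSpace X]

/-- From the Menger property, every open cover has a countable subcover
(enumerated by `ℕ`), provided the space is nonempty. -/
lemma exists_countable_subcover (hM : Menger X) (hne : Nonempty X)
    (𝒰 : Set (Set X)) (h1 : ∀ u ∈ 𝒰, IsOpen u) (h2 : ⋃₀ 𝒰 = Set.univ) :
    ∃ c : ℕ → Set X, (∀ n, c n ∈ 𝒰) ∧ (⋃ n, c n) = Set.univ := by
  obtain ⟨V, hV, hVc⟩ := hM (fun _ => 𝒰) (fun _ => ⟨h1, h2⟩)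
  have hA : (⋃ n, V n).Countable := countable_iUnion fun n => (hV n).2.countable
  have hAsub : (⋃ n, V n) ⊆ 𝒰 := iUnion_subset fun n => (hV n).1
  have hx : ∃ s, s ∈ ⋃ n, V n := by
    obtain ⟨x⟩ := hne
    have hx' : x ∈ ⋃₀ (⋃ n, V n) := by rw [hVc]; exact mem_univ x
    obtain ⟨s, hs, _⟩ := hx'
    exact ⟨s, hs⟩
  obtain ⟨c, hc⟩ := hA.exists_eq_range ⟨hx.choose, hx.choose_spec⟩
  refine ⟨c, fun n => hAsub (hc ▸ mem_range_self n), ?_⟩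
  rw [← sUnion_range, ← hc, hVc]

/-- A fixed enumeration of a countable subcover of `𝒰` (junk if `𝒰` is not an
open cover). -/
noncomputable def subEnum (hM : Menger X) (hne : Nonempty X)
    (𝒰 : Set (Set X)) : ℕ → Set X :=
  if h : (∀ u ∈ 𝒰, IsOpen u) ∧ ⋃₀ 𝒰 = Set.univ then
    (exists_countable_subcover hM hne 𝒰 h.1 h.2).choose
  else fun _ => ∅

lemma subEnum_spec (hM : Menger X) (hne : Nonempty X) (𝒰 : Set (Set X))
    (h1 : ∀ u ∈ 𝒰, IsOpen u) (h2 : ⋃₀ 𝒰 = Set.univ) :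
    (∀ n, subEnum hM hne 𝒰 n ∈ 𝒰) ∧ (⋃ n, subEnum hM hne 𝒰 n) = Set.univ := by
  have h : (∀ u ∈ 𝒰, IsOpen u) ∧ ⋃₀ 𝒰 = Set.univ := ⟨h1, h2⟩
  simp only [subEnum, dif_pos h]
  exact (exists_countable_subcover hM hne 𝒰 h.1 h.2).choose_spec

variable (hM : Menger X) (hne : Nonempty X)
variable (σ : List (Set (Set X)) → Set (Set X))

/-- The tree of countable subcovers indexed by finite sequences of naturals:
at node `t`, player II has played, at each stage `i < t.length`, the first
`t.get i + 1` sets of the countable subcover chosen at node `t.take i`. -/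
noncomputable def cfun (t : List ℕ) : ℕ → Set X :=
  subEnum hM hne (σ (List.ofFn fun i : Fin t.length =>
    {s | ∃ k ≤ t.get i, s = cfun (t.take i.1) k}))
  termination_by t.length
  decreasing_by
    all_goals simp [List.length_take]
    all_goals omega

/-- Player II's move at node `t` with parameter `m`: the first `m+1` sets of
the subcover at `t`. -/
noncomputable def mv (t : List ℕ) (m : ℕ) : Set (Set X) :=
  {s | ∃ k ≤ m, s = cfun hM hne σ t k}

/-- The history (list of II's moves) leading to node `t`. -/
noncomputable def hist (t : List ℕ) : List (Set (Set X)) :=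
  List.ofFn fun i : Fin t.length => mv hM hne σ (t.take i.1) (t.get i)

lemma cfun_def (t : List ℕ) :
    cfun hM hne σ t = subEnum hM hne (σ (hist hM hne σ t)) := by
  rw [cfun]
  rfl

lemma mv_finite (t : List ℕ) (m : ℕ) : (mv hM hne σ t m).Finite := by
  have h : mv hM hne σ t m = (fun k => cfun hM hne σ t k) '' (Set.Iic m) := by
    ext s
    simp only [mv, mem_setOf_eq, mem_image, mem_Iic]
    constructor
    · rintro ⟨k, hk, rfl⟩; exact ⟨k, hk, rfl⟩
    · rintro ⟨k, hk, rfl⟩; exact ⟨k, hk, rfl⟩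
  rw [h]
  exact (finite_Iic m).image _

lemma mv_congr (a a' : List ℕ) (b b' : ℕ) (h1 : a = a') (h2 : b = b') :
    mv hM hne σ a b = mv hM hne σ a' b' := by rw [h1, h2]

/-- Main recursion lemma: every node's cover `σ (hist t)` is an open cover,
and the chosen subcover enumerates elements of it and covers `X`. -/
lemma node_spec (hσ : MengerWinningI X σ) (t : List ℕ) :
    (∀ u ∈ σ (hist hM hne σ t), IsOpen u) ∧
    ⋃₀ (σ (hist hM hne σ t)) = Set.univ ∧
    (∀ k, cfun hM hne σ t k ∈ σ (hist hM hne σ t)) ∧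
    (⋃ k, cfun hM hne σ t k) = Set.univ := by
  have main : ∀ n : ℕ, ∀ t : List ℕ, t.length = n →
      (∀ u ∈ σ (hist hM hne σ t), IsOpen u) ∧
      ⋃₀ (σ (hist hM hne σ t)) = Set.univ ∧
      (∀ k, cfun hM hne σ t k ∈ σ (hist hM hne σ t)) ∧
      (⋃ k, cfun hM hne σ t k) = Set.univ := by
    intro n
    induction n using Nat.strong_induction_on with
    | _ n ih =>
      intro t ht
      -- The auxiliary response sequence.
      set Vt : ℕ → Set (Set X) := fun i =>
        if h : i < t.length then mv hM hne σ (t.take i) (t.get ⟨i, h⟩) else ∅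
        with hVt
      have hlist : ∀ m, m ≤ t.length →
          (List.ofFn fun i : Fin m => Vt i) = hist hM hne σ (t.take m) := by
        intro m hm
        apply List.ext_getElem
        · simp [hist, List.length_take]
          omega
        · intro i h1 h2
          have him : i < m := by simpa using h1
          have hit : i < t.length := lt_of_lt_of_le him hm
          rw [List.getElem_ofFn]
          simp only [hist, List.getElem_ofFn]
          simp only [hVt, dif_pos hit]
          apply mv_congr
          · rw [List.take_take]
            congr 1
            omega
          · simp [List.get_eq_getElem, List.getElem_take]
      have hleg : ∀ m, m < t.length → Vt m ⊆ mMoves σ Vt m ∧ (Vt m).Finite := by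
        intro m hm
        have hmm : mMoves σ Vt m = σ (hist hM hne σ (t.take m)) := by
          rw [mMoves, hlist m hm.le]
        have hVm : Vt m = mv hM hne σ (t.take m) (t.get ⟨m, hm⟩) := by
          simp only [hVt, dif_pos hm]
        constructor
        · rw [hmm, hVm]
          rintro s ⟨k, hk, rfl⟩
          have hlen : (t.take m).length = m := by
            simp [List.length_take]
            omega
          have hmn : m < n := by omega
          exact (ih m hmn (t.take m) hlen).2.2.1 k
        · rw [hVm]
          exact mv_finite hM hne σ _ _
      have hcov := (hσ Vt).1 t.length hleg
      have hmt : mMoves σ Vt t.length = σ (hist hM hne σ t) := by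
        rw [mMoves, hlist t.length le_rfl, List.take_length]
      rw [hmt] at hcov
      refine ⟨hcov.1, hcov.2, ?_, ?_⟩
      · intro k
        rw [cfun_def]
        exact (subEnum_spec hM hne _ hcov.1 hcov.2).1 k
      · rw [cfun_def]
        exact (subEnum_spec hM hne _ hcov.1 hcov.2).2
  exact main t.length t rfl

lemma cfun_isOpen (hσ : MengerWinningI X σ) (t : List ℕ) (k : ℕ) :
    IsOpen (cfun hM hne σ t k) :=
  (node_spec hM hne σ hσ t).1 _ ((node_spec hM hne σ hσ t).2.2.1 k)

lemma cfun_exists (hσ : MengerWinningI X σ) (t : List ℕ) (x : X) :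
    ∃ k, x ∈ cfun hM hne σ t k := by
  have h := (node_spec hM hne σ hσ t).2.2.2
  have hx : x ∈ ⋃ k, cfun hM hne σ t k := by rw [h]; exact mem_univ x
  exact mem_iUnion.mp hx

/-- Finite "initial-interval" trees of height at most `N` determined by a bound
function `κ`: nodes are sequences `u` of length at most `N` with each entry
below the bound of the corresponding proper prefix. -/
def SP (N : ℕ) (κ : List ℕ → ℕ) : Set (List ℕ) :=
  { u | u.length ≤ N ∧ ∀ i : Fin u.length, u.get i < κ (u.take i.1) }

lemma SP_finite (N : ℕ) (κ : List ℕ → ℕ) : (SP N κ).Finite := by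
  induction N with
  | zero =>
    apply Set.Finite.subset (Set.finite_singleton ([] : List ℕ))
    intro u hu
    have h0 : u.length = 0 := Nat.le_zero.mp hu.1
    simp [List.eq_nil_of_length_eq_zero h0]
  | succ N ih =>
    have hsub : SP (N+1) κ ⊆
        SP N κ ∪ ⋃ w ∈ SP N κ, (fun m => w ++ [m]) '' (Set.Iio (κ w)) := by
      intro u hu
      rcases Nat.lt_or_ge u.length (N+1) with h | h
      · exact Or.inl ⟨Nat.lt_succ_iff.mp h, hu.2⟩
      · right
        have hlen : u.length = N + 1 := le_antisymm hu.1 h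
        have hN : N < u.length := by omega
        have hwmem : u.take N ∈ SP N κ := by
          constructor
          · simp [List.length_take]
          · intro i
            have hi : i.1 < N := by
              have h2 := i.isLt
              simp [List.length_take] at h2
              omega
            have hi' : i.1 < u.length := by omega
            have e1 : (u.take N).take i.1 = u.take i.1 := by
              rw [List.take_take]
              congr 1
              omega
            have e2 : (u.take N).get i = u.get ⟨i.1, hi'⟩ := by
              simp [List.get_eq_getElem, List.getElem_take]
            rw [e2, e1]
            exact hu.2 ⟨i.1, hi'⟩
        have himg : u ∈ (fun m => (u.take N) ++ [m]) '' (Set.Iio (κ (u.take N))) := by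
          refine ⟨u.get ⟨N, hN⟩, hu.2 ⟨N, hN⟩, ?_⟩
          have e3 := List.take_concat_get hN
          rw [List.concat_eq_append] at e3
          have e4 : u.take (N+1) = u := by rw [← hlen, List.take_length]
          simpa [e4, List.get_eq_getElem] using e3
        exact mem_biUnion hwmem himg
    exact Set.Finite.subset
      (ih.union (Set.Finite.biUnion ih fun w _ => (Set.finite_Iio _).image _)) hsub

/-- The open set of points whose survivor tree (w.r.t. the subcover tree) of
height `N` is contained in the finite tree given by `κ`. -/
noncomputable def Dset (N : ℕ) (κ : List ℕ → ℕ) : Set X :=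
  ⋂ u ∈ {u | u ∈ SP N κ ∧ u.length < N}, ⋃ k ∈ Set.Iic (κ u), cfun hM hne σ u k

lemma Dset_mem (N : ℕ) (κ : List ℕ → ℕ) (x : X) :
    x ∈ Dset hM hne σ N κ ↔
      ∀ u, u ∈ SP N κ → u.length < N → ∃ k ≤ κ u, x ∈ cfun hM hne σ u k := by
  simp only [Dset, mem_iInter, mem_setOf_eq, mem_iUnion, mem_Iic, exists_prop,
    and_imp]

lemma Dset_isOpen (hσ : MengerWinningI X σ) (N : ℕ) (κ : List ℕ → ℕ) :
    IsOpen (Dset hM hne σ N κ) := by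
  apply Set.Finite.isOpen_biInter
  · exact (SP_finite N κ).subset (fun u hu => hu.1)
  · intro u _
    exact isOpen_biUnion fun k _ => cfun_isOpen hM hne σ hσ u k

end MengerHurewiczAux

open MengerHurewiczAux in
private lemma menger_forward {X : Type*} [TopologicalSpace X] (hM : Menger X) :
    ¬ ∃ σ, MengerWinningI X σ := by
  classical
  rintro ⟨σ, hσ⟩
  by_cases hne : Nonempty X
  · -- Main case: use the subcover tree and the finite-tree covers.
    set Ucov : ℕ → Set (Set X) := fun N =>
      {A | ∃ κ : List ℕ → ℕ, A = Dset hM hne σ (N+1) κ} with hUcovdef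
    have hUcov : ∀ N, (∀ u ∈ Ucov N, IsOpen u) ∧ ⋃₀ (Ucov N) = Set.univ := by
      intro N
      constructor
      · rintro u ⟨κ, rfl⟩
        exact Dset_isOpen hM hne σ hσ _ κ
      · apply Set.eq_univ_of_forall
        intro x
        refine ⟨Dset hM hne σ (N+1)
          (fun u => (cfun_exists hM hne σ hσ u x).choose), ⟨_, rfl⟩, ?_⟩
        rw [Dset_mem]
        intro u _ _
        exact ⟨_, le_rfl, (cfun_exists hM hne σ hσ u x).choose_spec⟩
    obtain ⟨V, hV, hVcov⟩ := hM Ucov hUcov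
    set F : ℕ → Set X → (List ℕ → ℕ) := fun N A =>
      if h : ∃ κ : List ℕ → ℕ, A = Dset hM hne σ (N+1) κ then h.choose
      else fun _ => 0 with hFdef
    have hF : ∀ N A, A ∈ V N → A = Dset hM hne σ (N+1) (F N A) := by
      intro N A hA
      have h : ∃ κ : List ℕ → ℕ, A = Dset hM hne σ (N+1) κ := (hV N).1 hA
      have he : F N A = h.choose := dif_pos h
      rw [he]
      exact h.choose_spec
    have hTfin : ∀ n, (⋃ A ∈ V n, (F n A) '' (SP (n+1) (F n A))).Finite := fun n =>
      Set.Finite.biUnion (hV n).2 (fun A _ => ((SP_finite (n+1) (F n A)).image _))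
    set Mf : ℕ → ℕ := fun n => (hTfin n).toFinset.sup id with hMfdef
    have hMf : ∀ n A, A ∈ V n → ∀ u ∈ SP (n+1) (F n A), F n A u ≤ Mf n := by
      intro n A hA u hu
      have hmem : F n A u ∈ (⋃ A ∈ V n, (F n A) '' (SP (n+1) (F n A))) :=
        Set.mem_biUnion hA ⟨u, hu, rfl⟩
      exact Finset.le_sup (f := id) ((hTfin n).mem_toFinset.mpr hmem)
    set fpref : ℕ → List ℕ := fun j => List.ofFn fun i : Fin j => Mf i.1
      with hfpref
    have fpref_len : ∀ j, (fpref j).length = j := fun j => by simp [hfpref]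
    have fpref_take : ∀ j i, i ≤ j → (fpref j).take i = fpref i := by
      intro j i hij
      apply List.ext_getElem
      · simp [hfpref, List.length_take]
        omega
      · intro a h1 h2
        simp [hfpref, List.getElem_take, List.getElem_ofFn]
    have fpref_get : ∀ j (i : Fin (fpref j).length), (fpref j).get i = Mf i.1 := by
      intro j i
      simp [hfpref, List.get_eq_getElem, List.getElem_ofFn]
    -- Player II's play along the branch `Mf`.
    set W : ℕ → Set (Set X) := fun i => mv hM hne σ (fpref i) (Mf i) with hWdef
    have hWhist : ∀ n, mMoves σ W n = σ (hist hM hne σ (fpref n)) := by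
      intro n
      rw [mMoves]
      refine congrArg σ ?_
      apply List.ext_getElem
      · simp [hist, fpref_len]
      · intro i h1 h2
        have hin : i < n := by simpa using h1
        simp only [List.getElem_ofFn, hist]
        rw [hWdef]
        apply mv_congr
        · rw [fpref_take n i hin.le]
        · rw [fpref_get n]
    have hWleg : ∀ n, W n ⊆ mMoves σ W n ∧ (W n).Finite := by
      intro n
      constructor
      · rw [hWhist n, hWdef]
        rintro s ⟨k, hk, rfl⟩
        exact (node_spec hM hne σ hσ (fpref n)).2.2.1 k
      · rw [hWdef]
        exact mv_finite hM hne σ _ _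
    have hWcov : ⋃₀ (⋃ n, W n) = Set.univ := by
      apply Set.eq_univ_of_forall
      intro x
      have hx : x ∈ ⋃₀ (⋃ n, V n) := by rw [hVcov]; exact Set.mem_univ x
      obtain ⟨A, hAmem, hxA⟩ := hx
      obtain ⟨n, hAn⟩ : ∃ n, A ∈ V n := by
        simpa [Set.mem_iUnion] using hAmem
      set κ : List ℕ → ℕ := F n A with hκ
      have hxD : x ∈ Dset hM hne σ (n+1) κ := by
        rw [hκ, ← hF n A hAn]
        exact hxA
      rw [Dset_mem] at hxD
      by_contra hcon
      have hnot : ∀ i, ¬ ∃ k ≤ Mf i, x ∈ cfun hM hne σ (fpref i) k := by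
        rintro i ⟨k, hk, hxk⟩
        exact hcon ⟨cfun hM hne σ (fpref i) k,
          Set.mem_iUnion.mpr ⟨i, ⟨k, hk, rfl⟩⟩, hxk⟩
      have hSPof : ∀ j, j ≤ n + 1 → (∀ i, i < j → Mf i < κ (fpref i)) →
          fpref j ∈ SP (n+1) κ := by
        intro j hj hstep
        refine ⟨by rw [fpref_len]; exact hj, ?_⟩
        intro i
        have hi : i.1 < j := by
          have h2 := i.isLt
          have hl := fpref_len j
          omega
        have e1 : (fpref j).take i.1 = fpref i.1 := fpref_take j i.1 (by omega)
        rw [e1]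
        calc (fpref j).get i = Mf i.1 := fpref_get j i
          _ < κ (fpref i.1) := hstep i.1 hi
      have hstep : ∀ j, j ≤ n → Mf j < κ (fpref j) := by
        intro j
        induction j using Nat.strong_induction_on with
        | _ j ihj =>
          intro hj
          have hSPj : fpref j ∈ SP (n+1) κ :=
            hSPof j (by omega) (fun i hi => ihj i hi (by omega))
          obtain ⟨k, hk, hxk⟩ := hxD (fpref j) hSPj (by rw [fpref_len]; omega)
          by_contra hle
          push_neg at hle
          exact hnot j ⟨k, le_trans hk hle, hxk⟩
      have hSPn : fpref n ∈ SP (n+1) κ :=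
        hSPof n (by omega) (fun i hi => hstep i (by omega))
      obtain ⟨k, hk, hxk⟩ := hxD (fpref n) hSPn (by rw [fpref_len]; omega)
      have hκM : κ (fpref n) ≤ Mf n := hMf n A hAn (fpref n) hSPn
      exact hnot n ⟨k, le_trans hk hκM, hxk⟩
    exact (hσ W).2 hWleg hWcov
  · -- Empty space: II wins by playing nothing.
    have hW := (hσ (fun _ => ∅)).2 (fun n => ⟨Set.empty_subset _, Set.finite_empty⟩)
    apply hW
    have huniv : (Set.univ : Set X) = ∅ := by
      rw [Set.eq_empty_iff_forall_notMem]
      intro x _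
      exact hne ⟨x⟩
    rw [huniv]
    simp

/-- Hurewicz's theorem: a space is Menger iff player I has no winning strategy
in the Menger game. -/
theorem menger_iff_no_winning_strategy {X : Type*} [TopologicalSpace X] :
    Menger X ↔ ¬ ∃ σ, MengerWinningI X σ := by
  constructor
  · exact menger_forward
  · intro hns U hU
    by_contra hbad
    apply hns
    refine ⟨fun l => U l.length, fun V => ⟨?_, ?_⟩⟩
    · intro n _
      have hmm : mMoves (fun l => U l.length) V n = U n := by
        simp [mMoves]
      rw [hmm]
      exact hU n
    · intro hVleg hcov
      apply hbad
      refine ⟨V, fun n => ?_, hcov⟩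
      have hmm : mMoves (fun l => U l.length) V n = U n := by
        simp [mMoves]
      rw [← hmm]
      exact hVleg n
end

section
/- If X is a separable metrizable space and its Vietoris hyperspace K(X) is hereditarily Baire, then for every compact metrizable space Z containing X as a subspace, the remainder Z∖X is Menger. -/
/-- The hyperspace of nonempty compact subsets of a topological space. -/
def Hyper (X : Type*) [TopologicalSpace X] : Type _ :=
  {K : Set X // IsCompact K ∧ K.Nonempty}

/-- The Vietoris topology on the hyperspace, generated by the sets
`{K : K ⊆ U}` and `{K : K ∩ U ≠ ∅}` for `U` open. -/
instance Hyper.instTopologicalSpace (X : Type*) [TopologicalSpace X] :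
    TopologicalSpace (Hyper X) :=
  TopologicalSpace.generateFrom
    ({s | ∃ U : Set X, IsOpen U ∧ s = {K : Hyper X | K.1 ⊆ U}} ∪
     {s | ∃ U : Set X, IsOpen U ∧ s = {K : Hyper X | (K.1 ∩ U).Nonempty}})

/-- A space is hereditarily Baire if every closed subspace is a Baire space. -/
def HereditarilyBaire (X : Type*) [TopologicalSpace X] : Prop :=
  ∀ C : Set X, IsClosed C → BaireSpace C

namespace MengerAux
open Set Metric Topology Filter TopologicalSpace

universe u

section HyperGeneric
variable {X : Type u} [TopologicalSpace X]

lemma hyperGen (X : Type u) [TopologicalSpace X] :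
    Hyper.instTopologicalSpace X = TopologicalSpace.generateFrom
      ({s | ∃ U : Set X, IsOpen U ∧ s = {K : Hyper X | K.1 ⊆ U}} ∪
       {s | ∃ U : Set X, IsOpen U ∧ s = {K : Hyper X | (K.1 ∩ U).Nonempty}}) := rfl

lemma isOpen_hyper_sub {U : Set X} (hU : IsOpen U) :
    IsOpen {K : Hyper X | K.1 ⊆ U} := by
  rw [hyperGen]  -- rewrite instance? IsOpen mentions instance
  exact TopologicalSpace.isOpen_generateFrom_of_mem (Or.inl ⟨U, hU, rfl⟩)

lemma isOpen_hyper_hit {U : Set X} (hU : IsOpen U) :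
    IsOpen {K : Hyper X | (K.1 ∩ U).Nonempty} := by
  rw [hyperGen]
  exact TopologicalSpace.isOpen_generateFrom_of_mem (Or.inr ⟨U, hU, rfl⟩)

/-- Convergence criterion in the Vietoris topology. -/
lemma tendsto_hyper {κ : ℕ → Hyper X} {B : Hyper X}
    (h1 : ∀ U : Set X, IsOpen U → B.1 ⊆ U → ∀ᶠ m in atTop, (κ m).1 ⊆ U)
    (h2 : ∀ U : Set X, IsOpen U → (B.1 ∩ U).Nonempty →
      ∀ᶠ m in atTop, ((κ m).1 ∩ U).Nonempty) :
    Tendsto κ atTop (𝓝 B) := by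
  rw [hyperGen]
  rw [TopologicalSpace.tendsto_nhds_generateFrom_iff]
  rintro s (⟨U, hU, rfl⟩ | ⟨U, hU, rfl⟩) hB
  · exact h1 U hU hB
  · exact h2 U hU hB

end HyperGeneric

set_option linter.unusedSectionVars false
set_option linter.unusedVariables false

def maxC (l : List ℕ) : ℕ := l.foldr max 0

noncomputable def eps (l : List ℕ) : ℝ := (1/2 : ℝ) ^ (l.length + maxC l)

lemma eps_pos (l : List ℕ) : 0 < eps l := by
  unfold eps; positivity

lemma eps_le_len (l : List ℕ) : eps l ≤ (1/2 : ℝ) ^ l.length := by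
  unfold eps
  apply pow_le_pow_of_le_one (by norm_num) (by norm_num)
  omega

lemma le_maxC {l : List ℕ} {m : ℕ} (h : m ∈ l) : m ≤ maxC l := by
  induction l with
  | nil => simp at h
  | cons a t ih =>
      rcases List.mem_cons.1 h with rfl | h
      · exact le_max_left _ _
      · exact (ih h).trans (le_max_right _ _)

lemma eps_le_coord {l : List ℕ} {m : ℕ} (h : m ∈ l) :
    eps l ≤ (1/2 : ℝ) ^ m := by
  unfold eps
  apply pow_le_pow_of_le_one (by norm_num) (by norm_num)
  have := le_maxC h
  omega



structure Pack (X Z : Type u) [TopologicalSpace X] [MetricSpace Z] where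
  f : X → Z
  hf : Topology.IsEmbedding f
  D : ℕ → ℕ → Set Z
  hDcl : ∀ n m, IsClosed (D n m)
  hDanti : ∀ n, ∀ {m m' : ℕ}, m ≤ m' → D n m' ⊆ D n m
  hK : ∀ n, (⋂ m, D n m) ⊆ Set.range f
  esc : (ℕ → ℕ) → Z
  hesc1 : ∀ a, esc a ∉ Set.range f
  hesc2 : ∀ a, esc a ∈ closure (Set.range f)
  hesc3 : ∀ a n, esc a ∈ D n (a n)

namespace Pack
variable {X Z : Type u} [TopologicalSpace X] [MetricSpace Z] [CompactSpace Z]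
variable (P : Pack X Z)

/-- Constraint set of a node (lists grow at the head; the head is the
deepest coordinate). -/
def C : List ℕ → Set Z
  | [] => univ
  | (m :: l) => C l ∩ P.D l.length m

def Kc (n : ℕ) : Set Z := ⋂ m, P.D n m

def Om (l : List ℕ) : Set Z := P.C l ∩ P.Kc l.length

def Pst (l : List ℕ) : Set Z :=
  closure ((Set.range P.f)ᶜ ∩ closure (Set.range P.f) ∩ P.C l)

lemma C_closed (l : List ℕ) : IsClosed (P.C l) := by
  induction l with
  | nil => exact isClosed_univ
  | cons m t ih => exact ih.inter (P.hDcl _ _)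

lemma C_compact (l : List ℕ) : IsCompact (P.C l) := (P.C_closed l).isCompact

lemma Kc_closed (n : ℕ) : IsClosed (P.Kc n) := isClosed_iInter fun m => P.hDcl n m

lemma C_anti {t l : List ℕ} (h : t <:+ l) : P.C l ⊆ P.C t := by
  induction l with
  | nil => rw [List.suffix_nil.1 h]
  | cons m l ih =>
      rcases List.suffix_cons_iff.1 h with rfl | h
      · exact Subset.rfl
      · exact (Set.inter_subset_left).trans (ih h)

lemma Om_closed (l : List ℕ) : IsClosed (P.Om l) := (P.C_closed l).inter (P.Kc_closed _)

lemma Om_compact (l : List ℕ) : IsCompact (P.Om l) := (P.Om_closed l).isCompact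

lemma Om_sub_range (l : List ℕ) : P.Om l ⊆ Set.range P.f :=
  Set.inter_subset_right.trans (P.hK _)

lemma Pst_closed (l : List ℕ) : IsClosed (P.Pst l) := isClosed_closure

lemma Pst_compact (l : List ℕ) : IsCompact (P.Pst l) := (P.Pst_closed l).isCompact

lemma Pst_sub_C (l : List ℕ) : P.Pst l ⊆ P.C l :=
  closure_minimal (fun z hz => hz.2) (P.C_closed l)

lemma Pst_sub_cl (l : List ℕ) : P.Pst l ⊆ closure (Set.range P.f) :=
  closure_minimal (fun z hz => hz.1.2) isClosed_closure

/-- padding function used to find escapers in `C l`. -/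
def pad (l : List ℕ) : ℕ → ℕ := fun i => l.getD (l.length - 1 - i) 0

lemma pad_cons_last (m : ℕ) (l : List ℕ) : pad (m :: l) l.length = m := by
  simp [pad]

lemma pad_cons_lt (m : ℕ) (l : List ℕ) {i : ℕ} (h : i < l.length) :
    pad (m :: l) i = pad l i := by
  unfold pad
  have h1 : (m :: l).length - 1 - i = (l.length - 1 - i) + 1 := by
    simp only [List.length_cons]
    omega
  rw [h1]
  simp

lemma esc_mem_C (l : List ℕ) (a : ℕ → ℕ)
    (ha : ∀ i, i < l.length → a i = pad l i) : P.esc a ∈ P.C l := by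
  induction l with
  | nil => exact mem_univ _
  | cons m l ih =>
      constructor
      · apply ih
        intro i hi
        rw [ha i (by simp; omega), pad_cons_lt m l hi]
      · have := ha l.length (by simp)
        rw [pad_cons_last] at this
        rw [← this]
        exact P.hesc3 a l.length

lemma preP_nonempty (l : List ℕ) :
    ((Set.range P.f)ᶜ ∩ closure (Set.range P.f) ∩ P.C l).Nonempty := by
  refine ⟨P.esc (pad l), ⟨P.hesc1 _, P.hesc2 _⟩, P.esc_mem_C l (pad l) (fun _ _ => rfl)⟩

lemma Pst_nonempty (l : List ℕ) : (P.Pst l).Nonempty :=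
  (P.preP_nonempty l).mono subset_closure

/-- Existence of a finite approximating net for `Pst l` inside the range,
with one point escaping a given closed subset `A` of the range. -/
lemma exists_F (l : List ℕ) (A : Set Z) (hA : IsClosed A) (hAr : A ⊆ Set.range P.f) :
    ∃ F : Set Z, F.Finite ∧ F ⊆ Set.range P.f ∧ F.Nonempty ∧
      (∀ p ∈ P.Pst l, ∃ x ∈ F, dist p x ≤ eps l) ∧
      (∀ x ∈ F, ∃ p ∈ P.Pst l, dist x p ≤ eps l) ∧
      (∃ x ∈ F, x ∉ A) := by
  classical
  set ε := eps l with hεdef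
  have hε : 0 < ε := eps_pos l
  -- selection of nearby range points
  set sel : Z → Z := fun p =>
    if h : ∃ x ∈ Set.range P.f, dist p x < ε/2 then h.choose else p with hseldef
  have hsel : ∀ p ∈ closure (Set.range P.f),
      sel p ∈ Set.range P.f ∧ dist p (sel p) < ε/2 := by
    intro p hp
    have h : ∃ x ∈ Set.range P.f, dist p x < ε/2 :=
      Metric.mem_closure_iff.1 hp (ε/2) (by linarith)
    simp only [hseldef, dif_pos h]
    exact ⟨h.choose_spec.1, h.choose_spec.2⟩
  -- finite net inside Pst l
  have hcov : P.Pst l ⊆ ⋃ p ∈ P.Pst l, Metric.ball p (ε/2) := by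
    intro p hp
    exact Set.mem_biUnion hp (Metric.mem_ball_self (by linarith))
  obtain ⟨S, hS_sub, hS_fin, hS_cov⟩ :=
    (P.Pst_compact l).elim_finite_subcover_image
      (fun p _ => Metric.isOpen_ball) hcov
  -- the special escaping point
  obtain ⟨y₀, hy₀⟩ := P.preP_nonempty l
  have hy₀P : y₀ ∈ P.Pst l := subset_closure hy₀
  have hy₀r : y₀ ∉ Set.range P.f := hy₀.1.1
  have hy₀c : y₀ ∈ closure (Set.range P.f) := hy₀.1.2
  have hx₀ : ∃ x ∈ Set.range P.f, dist y₀ x < ε/2 ∧ x ∉ A := by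
    rcases A.eq_empty_or_nonempty with rfl | hAne
    · obtain ⟨x, hx1, hx2⟩ := Metric.mem_closure_iff.1 hy₀c (ε/2) (by linarith)
      exact ⟨x, hx1, hx2, notMem_empty x⟩
    · have hy₀A : y₀ ∉ A := fun h => hy₀r (hAr h)
      have hdpos : 0 < Metric.infDist y₀ A := (hA.notMem_iff_infDist_pos hAne).1 hy₀A
      obtain ⟨x, hx1, hx2⟩ := Metric.mem_closure_iff.1 hy₀c
        (min (ε/2) (Metric.infDist y₀ A)) (lt_min (by linarith) hdpos)
      refine ⟨x, hx1, lt_of_lt_of_le hx2 (min_le_left _ _), fun hxA => ?_⟩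
      exact absurd (Metric.infDist_le_dist_of_mem hxA)
        (not_le.2 (lt_of_lt_of_le hx2 (min_le_right _ _)))
  obtain ⟨x₀, hx₀r, hx₀d, hx₀A⟩ := hx₀
  refine ⟨(sel '' S) ∪ {x₀}, ((hS_fin.image _).union (finite_singleton _)), ?_, ?_, ?_, ?_, ?_⟩
  · rintro x (⟨p, hpS, rfl⟩ | rfl)
    · exact (hsel p ((P.Pst_sub_cl l) (hS_sub hpS))).1
    · exact hx₀r
  · exact ⟨x₀, Or.inr rfl⟩
  · intro p hp
    obtain ⟨q, hqS, hq⟩ := Set.mem_iUnion₂.1 (hS_cov hp)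
    have hq2 := hsel q ((P.Pst_sub_cl l) (hS_sub hqS))
    refine ⟨sel q, Or.inl ⟨q, hqS, rfl⟩, ?_⟩
    calc dist p (sel q) ≤ dist p q + dist q (sel q) := dist_triangle _ _ _
    _ ≤ ε/2 + ε/2 := add_le_add (le_of_lt (Metric.mem_ball.1 hq)) (le_of_lt hq2.2)
    _ = ε := by ring
  · rintro x (⟨p, hpS, rfl⟩ | rfl)
    · have hp2 := hsel p ((P.Pst_sub_cl l) (hS_sub hpS))
      exact ⟨p, hS_sub hpS, by rw [dist_comm]; linarith [hp2.2]⟩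
    · exact ⟨y₀, hy₀P, by rw [dist_comm]; linarith⟩
  · exact ⟨x₀, Or.inr rfl, hx₀A⟩

/-- The recursive construction of the sets `A_s` (with their nets). -/
noncomputable def node : List ℕ → {p : Set Z × Set Z // IsCompact p.1 ∧ p.1 ⊆ Set.range P.f}
  | [] =>
    let h := P.exists_F [] ∅ isClosed_empty (empty_subset _)
    ⟨(P.Om [] ∪ h.choose, h.choose),
      (P.Om_compact []).union h.choose_spec.1.isCompact,
      Set.union_subset (P.Om_sub_range []) h.choose_spec.2.1⟩
  | (m :: l) =>
    let prev := node l
    let h := P.exists_F (m :: l) prev.1.1 prev.2.1.isClosed prev.2.2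
    ⟨(prev.1.1 ∪ (P.Om (m :: l) ∪ h.choose), h.choose),
      prev.2.1.union ((P.Om_compact _).union h.choose_spec.1.isCompact),
      Set.union_subset prev.2.2
        (Set.union_subset (P.Om_sub_range _) h.choose_spec.2.1)⟩

noncomputable def Aset (l : List ℕ) : Set Z := (P.node l).1.1
noncomputable def Fnet (l : List ℕ) : Set Z := (P.node l).1.2

lemma Aset_compact (l : List ℕ) : IsCompact (P.Aset l) := (P.node l).2.1
lemma Aset_sub_range (l : List ℕ) : P.Aset l ⊆ Set.range P.f := (P.node l).2.2

lemma Aset_nil : P.Aset [] = P.Om [] ∪ P.Fnet [] := rfl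

lemma Aset_cons (m : ℕ) (l : List ℕ) :
    P.Aset (m :: l) = P.Aset l ∪ (P.Om (m :: l) ∪ P.Fnet (m :: l)) := rfl

lemma Fnet_spec (l : List ℕ) :
    (P.Fnet l).Finite ∧ P.Fnet l ⊆ Set.range P.f ∧ (P.Fnet l).Nonempty ∧
      (∀ p ∈ P.Pst l, ∃ x ∈ P.Fnet l, dist p x ≤ eps l) ∧
      (∀ x ∈ P.Fnet l, ∃ p ∈ P.Pst l, dist x p ≤ eps l) := by
  cases l with
  | nil =>
      have h := (P.exists_F [] ∅ isClosed_empty (empty_subset _)).choose_spec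
      exact ⟨h.1, h.2.1, h.2.2.1, h.2.2.2.1, h.2.2.2.2.1⟩
  | cons m l =>
      have h := (P.exists_F (m :: l) (P.node l).1.1 (P.node l).2.1.isClosed
        (P.node l).2.2).choose_spec
      exact ⟨h.1, h.2.1, h.2.2.1, h.2.2.2.1, h.2.2.2.2.1⟩

lemma Fnet_new (m : ℕ) (l : List ℕ) : ∃ x ∈ P.Fnet (m :: l), x ∉ P.Aset l := by
  have h := (P.exists_F (m :: l) (P.node l).1.1 (P.node l).2.1.isClosed
    (P.node l).2.2).choose_spec
  exact h.2.2.2.2.2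

lemma Fnet_sub_Aset (l : List ℕ) : P.Fnet l ⊆ P.Aset l := by
  cases l with
  | nil => rw [Aset_nil]; exact Set.subset_union_right
  | cons m l =>
      rw [Aset_cons]
      exact Set.subset_union_right.trans Set.subset_union_right

lemma Om_sub_Aset (l : List ℕ) : P.Om l ⊆ P.Aset l := by
  cases l with
  | nil => rw [Aset_nil]; exact Set.subset_union_left
  | cons m l =>
      rw [Aset_cons]
      exact Set.subset_union_left.trans Set.subset_union_right

lemma Aset_nonempty (l : List ℕ) : (P.Aset l).Nonempty :=
  ((P.Fnet_spec l).2.2.1).mono (P.Fnet_sub_Aset l)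

lemma Aset_mono {t l : List ℕ} (h : t <:+ l) : P.Aset t ⊆ P.Aset l := by
  induction l with
  | nil => rw [List.suffix_nil.1 h]
  | cons m l ih =>
      rcases List.suffix_cons_iff.1 h with rfl | h
      · exact Subset.rfl
      · rw [Aset_cons]; exact (ih h).trans Set.subset_union_left

lemma Aset_cases {z : Z} {u l : List ℕ} (hu : u <:+ l) (hz : z ∈ P.Aset l) :
    z ∈ P.Aset u ∨ ∃ t, t <:+ l ∧ u <:+ t ∧ u ≠ t ∧ z ∈ P.Om t ∪ P.Fnet t := by
  induction l with
  | nil => rw [List.suffix_nil.1 hu] at *; exact Or.inl hz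
  | cons m l ih =>
      rcases List.suffix_cons_iff.1 hu with rfl | hu'
      · exact Or.inl hz
      · rw [Aset_cons] at hz
        rcases hz with hz | hz
        · rcases ih hu' hz with h | ⟨t, ht1, ht2, ht3, ht4⟩
          · exact Or.inl h
          · exact Or.inr ⟨t, ht1.trans (List.suffix_cons m l), ht2, ht3, ht4⟩
        · refine Or.inr ⟨m :: l, List.suffix_refl _, hu, ?_, hz⟩
          rintro rfl
          have := List.IsSuffix.length_le hu'
          simp at this

lemma C_cons (m : ℕ) (l : List ℕ) : P.C (m :: l) = P.C l ∩ P.D l.length m := rfl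

lemma iInter_C_cons (l : List ℕ) : (⋂ m, P.C (m :: l)) = P.Om l := by
  simp only [C_cons]
  rw [← Set.inter_iInter]
  rfl

lemma C_cons_anti (l : List ℕ) {m m' : ℕ} (h : m ≤ m') :
    P.C (m' :: l) ⊆ P.C (m :: l) := by
  rw [C_cons, C_cons]
  exact Set.inter_subset_inter Subset.rfl (P.hDanti _ h)

/-- The compact subsets of `X` defined by the construction. -/
noncomputable def hyp (l : List ℕ) : Hyper X :=
  ⟨P.f ⁻¹' P.Aset l,
    P.hf.isCompact_iff.2
      (by rw [Set.image_preimage_eq_of_subset (P.Aset_sub_range l)]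
          exact P.Aset_compact l),
    by
      obtain ⟨z, hz⟩ := P.Aset_nonempty l
      obtain ⟨w, rfl⟩ := P.Aset_sub_range l hz
      exact ⟨w, hz⟩⟩

lemma image_hyp (l : List ℕ) : P.f '' (P.hyp l).1 = P.Aset l :=
  Set.image_preimage_eq_of_subset (P.Aset_sub_range l)

noncomputable def Qset : Set (Hyper X) := Set.range P.hyp

lemma hyp_mem_Qset (l : List ℕ) : P.hyp l ∈ P.Qset := ⟨l, rfl⟩

lemma hyp_ne (m : ℕ) (l : List ℕ) : P.hyp (m :: l) ≠ P.hyp l := by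
  obtain ⟨x, hxF, hxA⟩ := P.Fnet_new m l
  obtain ⟨w, rfl⟩ := (P.Fnet_spec (m :: l)).2.1 hxF
  intro hcontra
  have hx : (w : X) ∈ (P.hyp (m :: l)).1 := P.Fnet_sub_Aset (m :: l) hxF
  rw [hcontra] at hx
  exact hxA hx

lemma new_bound {u t : List ℕ} (hsuf : u <:+ t) (hne : u ≠ t) {z : Z}
    (hz : z ∈ P.Om t ∪ P.Fnet t) :
    ∃ m w, (m :: u) <:+ t ∧ w ∈ P.C (m :: u) ∧ dist z w ≤ (1/2 : ℝ) ^ m := by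
  obtain ⟨a, ha⟩ := hsuf
  have hane : a ≠ [] := by
    rintro rfl
    have : t = u := by simpa using ha.symm
    exact hne this.symm
  obtain ⟨a', m, rfl⟩ := (a.eq_nil_or_concat').resolve_left hane
  have hsuf2 : (m :: u) <:+ t := ⟨a', by rw [← ha]; simp⟩
  have hmem : m ∈ t := by rw [← ha]; simp
  have heps : eps t ≤ (1/2 : ℝ) ^ m := eps_le_coord hmem
  rcases hz with hz | hz
  · exact ⟨m, z, hsuf2, P.C_anti hsuf2 (Set.inter_subset_left hz),
      by rw [dist_self]; positivity⟩
  · obtain ⟨p, hp, hd⟩ := (P.Fnet_spec t).2.2.2.2 z hz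
    exact ⟨m, p, hsuf2, P.C_anti hsuf2 (P.Pst_sub_C t hp), hd.trans heps⟩

lemma tendsto_children (l : List ℕ) :
    Tendsto (fun m => P.hyp (m :: l)) atTop (𝓝 (P.hyp l)) := by
  apply tendsto_hyper
  · intro U hU hBU
    obtain ⟨V, hV, rfl⟩ := P.hf.toIsInducing.isOpen_iff.1 hU
    have hAV : P.Aset l ⊆ V := by
      intro z hz
      obtain ⟨w, rfl⟩ := P.Aset_sub_range l hz
      exact hBU hz
    -- a tail of the constraint sets is inside V
    have hdir : Directed (· ⊇ ·) (fun m => P.C (m :: l)) := by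
      intro m m'
      exact ⟨max m m', P.C_cons_anti l (le_max_left _ _),
        P.C_cons_anti l (le_max_right _ _)⟩
    obtain ⟨m₁, hm₁⟩ := exists_subset_nhds_of_isCompact' hdir
      (fun m => P.C_compact (m :: l)) (fun m => P.C_closed (m :: l))
      (fun x hx => hV.mem_nhds (by
        rw [iInter_C_cons] at hx
        exact hAV (P.Om_sub_Aset l hx)))
    obtain ⟨δ, hδpos, hδ⟩ := (P.C_compact (m₁ :: l)).exists_thickening_subset_open hV hm₁
    obtain ⟨M, hM⟩ := exists_pow_lt_of_lt_one hδpos (by norm_num : (1/2 : ℝ) < 1)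
    filter_upwards [Filter.eventually_ge_atTop (max m₁ M)] with m hm
    intro w hw
    have hz : P.f w ∈ P.Aset (m :: l) := hw
    rw [Aset_cons] at hz
    simp only [Set.mem_preimage]
    rcases hz with hz | hz
    · exact hAV hz
    · have hthick : P.f w ∈ Metric.thickening δ (P.C (m₁ :: l)) := by
        rcases hz with hz | hz
        · apply Metric.self_subset_thickening hδpos
          exact P.C_cons_anti l (le_trans (le_max_left _ _) hm) (Set.inter_subset_left hz)
        · obtain ⟨p, hp, hd⟩ := (P.Fnet_spec (m :: l)).2.2.2.2 _ hz
          rw [Metric.mem_thickening_iff]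
          refine ⟨p, P.C_cons_anti l (le_trans (le_max_left _ _) hm) (P.Pst_sub_C _ hp), ?_⟩
          calc dist (P.f w) p ≤ eps (m :: l) := hd
          _ ≤ (1/2 : ℝ) ^ m := eps_le_coord (by simp)
          _ ≤ (1/2 : ℝ) ^ M := by
              apply pow_le_pow_of_le_one (by norm_num) (by norm_num)
              exact le_trans (le_max_right _ _) hm
          _ < δ := hM
      exact hδ hthick
  · intro U hU hne
    apply Filter.Eventually.of_forall
    intro m
    apply hne.mono
    apply Set.inter_subset_inter _ Subset.rfl
    exact Set.preimage_mono (P.Aset_mono (List.suffix_cons m l))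

lemma not_isolated (l : List ℕ) :
    P.hyp l ∈ closure (P.Qset \ {P.hyp l}) := by
  rw [_root_.mem_closure_iff]
  intro O hO hlO
  obtain ⟨m, hm⟩ := ((P.tendsto_children l).eventually (hO.mem_nhds hlO)).exists
  exact ⟨P.hyp (m :: l), hm, ⟨⟨m :: l, rfl⟩, P.hyp_ne m l⟩⟩

include P in
lemma isClosed_singleton_hyp (A : Hyper X) : IsClosed ({A} : Set (Hyper X)) := by
  rw [← isOpen_compl_iff, isOpen_iff_forall_mem_open]
  intro B hB
  have hBA : B ≠ A := hB
  have hfAB : P.f '' A.1 ≠ P.f '' B.1 := by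
    intro heq
    apply hBA
    apply Subtype.ext
    have h1 : A.1 = B.1 := by
      rw [← Set.preimage_image_eq A.1 P.hf.injective,
          ← Set.preimage_image_eq B.1 P.hf.injective, heq]
    rw [h1]
  have hfBcl : IsClosed (P.f '' B.1) := (B.2.1.image P.hf.continuous).isClosed
  have hfAcl : IsClosed (P.f '' A.1) := (A.2.1.image P.hf.continuous).isClosed
  by_cases hsub : P.f '' A.1 ⊆ P.f '' B.1
  · obtain ⟨b, hb, hbA⟩ : ∃ b, b ∈ P.f '' B.1 ∧ b ∉ P.f '' A.1 := by
      by_contra hcon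
      push_neg at hcon
      exact hfAB (Set.Subset.antisymm hsub hcon)
    have hδpos : 0 < Metric.infDist b (P.f '' A.1) :=
      (hfAcl.notMem_iff_infDist_pos (A.2.2.image _)).1 hbA
    set δ := Metric.infDist b (P.f '' A.1)
    refine ⟨{K : Hyper X | (K.1 ∩ P.f ⁻¹' (Metric.ball b δ)).Nonempty},
      fun K hK hKA => ?_, isOpen_hyper_hit (P.hf.continuous.isOpen_preimage _
        Metric.isOpen_ball), ?_⟩
    · rw [Set.mem_singleton_iff] at hKA
      subst hKA
      obtain ⟨w, hwK, hwb⟩ := hK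
      have : Metric.infDist b (P.f '' K.1) ≤ dist b (P.f w) :=
        Metric.infDist_le_dist_of_mem ⟨w, hwK, rfl⟩
      rw [Set.mem_preimage, Metric.mem_ball] at hwb
      rw [dist_comm] at hwb
      exact absurd (this.trans_lt hwb) (lt_irrefl _)
    · obtain ⟨w, hwB, rfl⟩ := hb
      exact ⟨w, hwB, by simp [Metric.mem_ball, dist_self, hδpos]⟩
  · obtain ⟨a, ha, haB⟩ : ∃ a, a ∈ P.f '' A.1 ∧ a ∉ P.f '' B.1 := by
      by_contra hcon
      push_neg at hcon
      exact hsub hcon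
    have hδpos : 0 < Metric.infDist a (P.f '' B.1) :=
      (hfBcl.notMem_iff_infDist_pos (B.2.2.image _)).1 haB
    set δ := Metric.infDist a (P.f '' B.1)
    refine ⟨{K : Hyper X | K.1 ⊆ P.f ⁻¹' (Metric.thickening δ (P.f '' B.1))},
      fun K hK hKA => ?_, isOpen_hyper_sub (P.hf.continuous.isOpen_preimage _
        Metric.isOpen_thickening), ?_⟩
    · rw [Set.mem_singleton_iff] at hKA
      subst hKA
      obtain ⟨w, hwA, rfl⟩ := ha
      have := hK hwA
      rw [Set.mem_preimage, Metric.mem_thickening_iff] at this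
      obtain ⟨z, hz, hdz⟩ := this
      exact absurd ((Metric.infDist_le_dist_of_mem hz).trans_lt hdz) (lt_irrefl _)
    · intro w hw
      rw [Set.mem_preimage]
      exact Metric.self_subset_thickening hδpos _ ⟨w, hw, rfl⟩

end Pack

/-! ### Branch lists and the tree trichotomy -/

def rl (b : ℕ → ℕ) : ℕ → List ℕ
  | 0 => []
  | (k+1) => b k :: rl b k

lemma rl_length (b : ℕ → ℕ) (k : ℕ) : (rl b k).length = k := by
  induction k with
  | zero => rfl
  | succ k ih => simp [rl, ih]

lemma infinite_exists_ge {s : Set ℕ} (hs : s.Infinite) (N : ℕ) : ∃ n ∈ s, N ≤ n := by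
  obtain ⟨n, hn, hn2⟩ := hs.exists_notMem_finite (Set.finite_Iic N)
  have : N < n := by simpa [Set.mem_Iic] using hn2
  exact ⟨n, hn, this.le⟩

lemma exists_cons_suffix {u t : List ℕ} (hsuf : u <:+ t) (hne : u ≠ t) :
    ∃ m, (m :: u) <:+ t := by
  obtain ⟨a, ha⟩ := hsuf
  have hane : a ≠ [] := by
    rintro rfl
    have : t = u := by simpa using ha.symm
    exact hne this.symm
  obtain ⟨a', m, rfl⟩ := (a.eq_nil_or_concat').resolve_left hane
  exact ⟨m, a', by rw [← ha]; simp⟩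

lemma suffix_cons_unique {m m' : ℕ} {u L : List ℕ}
    (h1 : (m :: u) <:+ L) (h2 : (m' :: u) <:+ L) : m = m' := by
  obtain ⟨a, ha⟩ := h1
  obtain ⟨a', ha'⟩ := h2
  have heq : a ++ m :: u = a' ++ m' :: u := ha.trans ha'.symm
  have hlen : a.length = a'.length := by
    have := congrArg List.length heq
    simp at this
    omega
  have := (List.append_inj heq hlen).2
  simpa using this

lemma trichotomy (g : ℕ → List ℕ) :
    (∃ l, {n | g n = l}.Infinite) ∨
    (∃ u, ∀ M, {n | ∃ m, M ≤ m ∧ (m :: u) <:+ g n}.Infinite) ∨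
    (∃ b : ℕ → ℕ, ∀ k, {n | rl b k <:+ g n}.Infinite) := by
  classical
  set T : Set (List ℕ) := {l | {n | l <:+ g n}.Infinite} with hT
  have hnil : [] ∈ T := by
    have : {n | [] <:+ g n} = Set.univ := by
      ext n; simp
    simp only [hT, Set.mem_setOf_eq, this]
    exact Set.infinite_univ
  by_cases hclimb : ∀ l ∈ T, ∃ m, (m :: l) ∈ T
  · right; right
    choose ch hch using hclimb
    let S : ℕ → {l : List ℕ // l ∈ T} := fun k =>
      Nat.rec ⟨[], hnil⟩ (fun _ p => ⟨ch p.1 p.2 :: p.1, hch p.1 p.2⟩) k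
    refine ⟨fun k => ch (S k).1 (S k).2, fun k => ?_⟩
    have hS : rl (fun k => ch (S k).1 (S k).2) k = (S k).1 := by
      induction k with
      | zero => rfl
      | succ k ih => simp only [rl, ih]; rfl
    rw [hS]
    exact (S k).2
  · push_neg at hclimb
    obtain ⟨u, huT, humax⟩ := hclimb
    by_cases heq : {n | g n = u}.Infinite
    · exact Or.inl ⟨u, heq⟩
    · right; left
      refine ⟨u, fun M => ?_⟩
      have hJ : ({n | u <:+ g n} \ {n | g n = u}).Infinite :=
        huT.diff (Set.not_infinite.1 heq)
      have hfinU : (⋃ m ∈ Set.Iio M, {n | (m :: u) <:+ g n}).Finite := by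
        apply Set.Finite.biUnion (Set.finite_Iio M)
        intro m _
        exact Set.not_infinite.1 (fun hm => humax m hm)
      apply Set.Infinite.mono _ (hJ.diff hfinU)
      rintro n ⟨⟨hsuf, hne⟩, hnot⟩
      obtain ⟨m, hm⟩ := exists_cons_suffix hsuf (fun h => hne h.symm)
      refine ⟨m, ?_, hm⟩
      by_contra hlt
      push_neg at hlt
      exact hnot (Set.mem_biUnion (Set.mem_Iio.2 hlt) hm)

namespace Pack
variable {X Z : Type u} [TopologicalSpace X] [MetricSpace Z] [CompactSpace Z]
variable (P : Pack X Z)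

lemma esc_mem_C_rl (b : ℕ → ℕ) (k : ℕ) : P.esc b ∈ P.C (rl b k) := by
  induction k with
  | zero => exact Set.mem_univ _
  | succ k ih =>
      refine ⟨ih, ?_⟩
      have : (rl b k).length = k := rl_length b k
      rw [this]
      exact P.hesc3 b k


lemma fB_eq_imp_mem {B : Hyper X} {l : List ℕ} (hEq : P.f '' B.1 = P.Aset l) :
    B ∈ P.Qset := by
  refine ⟨l, ?_⟩
  apply Subtype.ext
  have h1 : B.1 = P.f ⁻¹' (P.f '' B.1) := (Set.preimage_image_eq B.1 P.hf.injective).symm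
  show P.f ⁻¹' (P.Aset l) = B.1
  rw [h1, hEq]

lemma Qset_isClosed : IsClosed P.Qset := by
  classical
  apply isClosed_of_closure_subset
  intro B hB
  set fB : Set Z := P.f '' B.1 with hfBdef
  have hfBc : IsCompact fB := B.2.1.image P.hf.continuous
  have hfBcl : IsClosed fB := hfBc.isClosed
  have hfBne : fB.Nonempty := B.2.2.image _
  have hfBr : fB ⊆ Set.range P.f := Set.image_subset_range _ _
  -- finite nets of fB
  have hnet : ∀ n : ℕ, ∃ S : Set Z, S.Finite ∧ S ⊆ fB ∧
      fB ⊆ ⋃ x ∈ S, Metric.ball x ((1/2 : ℝ)^n) := by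
    intro n
    obtain ⟨S, h1, h2, h3⟩ := hfBc.elim_finite_subcover_image
      (fun x (_ : x ∈ fB) => Metric.isOpen_ball)
      (fun x hx => Set.mem_biUnion hx (Metric.mem_ball_self (by positivity : (0:ℝ) < (1/2 : ℝ)^n)))
    exact ⟨S, h2, h1, h3⟩
  choose net hnetf hnets hnetc using hnet
  -- basic neighborhoods of B
  set W : ℕ → Set (Hyper X) := fun n =>
    {K : Hyper X | K.1 ⊆ P.f ⁻¹' (Metric.thickening ((1/2 : ℝ)^n) fB)} ∩
      ⋂ x ∈ net n, {K : Hyper X | (K.1 ∩ P.f ⁻¹' (Metric.ball x ((1/2 : ℝ)^n))).Nonempty}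
    with hWdef
  have hWopen : ∀ n, IsOpen (W n) := by
    intro n
    apply IsOpen.inter
    · exact isOpen_hyper_sub (P.hf.continuous.isOpen_preimage _ Metric.isOpen_thickening)
    · exact (hnetf n).isOpen_biInter (fun x _ => isOpen_hyper_hit
        (P.hf.continuous.isOpen_preimage _ Metric.isOpen_ball))
  have hWB : ∀ n, B ∈ W n := by
    intro n
    constructor
    · intro w hw
      exact Metric.self_subset_thickening (by positivity) _ ⟨w, hw, rfl⟩
    · apply Set.mem_iInter₂.2
      intro x hx
      obtain ⟨w, hwB, rfl⟩ := hnets n hx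
      refine ⟨w, hwB, ?_⟩
      simp only [Set.mem_preimage, Metric.mem_ball, dist_self]
      positivity
  have hsel : ∀ n, ∃ l, P.hyp l ∈ W n := by
    intro n
    obtain ⟨K, hKW, hKQ⟩ := _root_.mem_closure_iff.1 hB (W n) (hWopen n) (hWB n)
    obtain ⟨l, rfl⟩ := hKQ
    exact ⟨l, hKW⟩
  choose g hg using hsel
  have HA : ∀ n, P.Aset (g n) ⊆ Metric.thickening ((1/2 : ℝ)^n) fB := by
    intro n z hz
    obtain ⟨w, rfl⟩ := P.Aset_sub_range _ hz
    exact (hg n).1 hz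
  have HB : ∀ n, ∀ b ∈ fB, ∃ z ∈ P.Aset (g n), dist b z < 2 * (1/2 : ℝ)^n := by
    intro n b hb
    obtain ⟨x, hxn, hbx⟩ := Set.mem_iUnion₂.1 (hnetc n hb)
    obtain ⟨w, hwK, hwb⟩ := Set.mem_iInter₂.1 (hg n).2 x hxn
    refine ⟨P.f w, hwK, ?_⟩
    have h1 : dist b x < (1/2 : ℝ)^n := Metric.mem_ball.1 hbx
    have h2 : dist (P.f w) x < (1/2 : ℝ)^n := Metric.mem_ball.1 hwb
    calc dist b (P.f w) ≤ dist b x + dist x (P.f w) := dist_triangle _ _ _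
    _ = dist b x + dist (P.f w) x := by rw [dist_comm x]
    _ < (1/2 : ℝ)^n + (1/2 : ℝ)^n := by linarith
    _ = 2 * (1/2 : ℝ)^n := by ring
  -- upper bound: if l is a suffix of infinitely many g n then Aset l ⊆ fB
  have Hsub : ∀ l : List ℕ, {n | l <:+ g n}.Infinite → P.Aset l ⊆ fB := by
    intro l hl a ha
    rw [← hfBcl.closure_eq]
    apply Metric.mem_closure_iff.2
    intro ε hε
    obtain ⟨N, hN⟩ := exists_pow_lt_of_lt_one hε (by norm_num : (1/2 : ℝ) < 1)
    obtain ⟨n, hn, hnN⟩ := infinite_exists_ge hl N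
    have h2 := HA n (P.Aset_mono hn ha)
    obtain ⟨z, hz, hdz⟩ := Metric.mem_thickening_iff.1 h2
    refine ⟨z, hz, hdz.trans_le ?_ |>.trans_le hN.le⟩
    exact pow_le_pow_of_le_one (by norm_num) (by norm_num) hnN
  -- trichotomy on the selected nodes
  rcases trichotomy g with ⟨l, hl⟩ | ⟨u, hu⟩ | ⟨bb, hbb⟩
  · -- stable case
    apply P.fB_eq_imp_mem (l := l)
    apply Set.Subset.antisymm
    · intro b hb
      rw [← (P.Aset_compact l).isClosed.closure_eq]
      apply Metric.mem_closure_iff.2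
      intro ε hε
      obtain ⟨N, hN⟩ := exists_pow_lt_of_lt_one (half_pos hε)
        (by norm_num : (1/2 : ℝ) < 1)
      obtain ⟨n, hn, hnN⟩ := infinite_exists_ge hl N
      obtain ⟨z, hz, hdz⟩ := HB n b hb
      rw [Set.mem_setOf_eq] at hn
      rw [hn] at hz
      refine ⟨z, hz, ?_⟩
      have : (2 : ℝ) * (1/2)^n ≤ 2 * (1/2)^N := by
        have := pow_le_pow_of_le_one (by norm_num : (0:ℝ) ≤ 1/2)
          (by norm_num : (1/2 : ℝ) ≤ 1) hnN
        linarith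
      linarith
    · exact Hsub l (hl.mono (fun n hn => by rw [Set.mem_setOf_eq] at hn ⊢; rw [hn]))
  · -- divergence case
    apply P.fB_eq_imp_mem (l := u)
    have husuf : {n | u <:+ g n}.Infinite := by
      apply (hu 0).mono
      rintro n ⟨m, _, hm⟩
      exact (List.suffix_cons m u).trans hm
    apply Set.Subset.antisymm
    · -- fB ⊆ Aset u
      intro b hb
      by_contra hbn
      have hAune : (P.Aset u).Nonempty := P.Aset_nonempty u
      have hεpos : 0 < Metric.infDist b (P.Aset u) :=
        ((P.Aset_compact u).isClosed.notMem_iff_infDist_pos hAune).1 hbn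
      set ε := Metric.infDist b (P.Aset u) with hεdef
      have key : ∀ M : ℕ, ∃ w ∈ P.C (M :: u), dist b w ≤ 2 * (1/2 : ℝ)^M := by
        intro M
        have hmin : 0 < min ε ((1/2 : ℝ)^M) := lt_min hεpos (by positivity)
        obtain ⟨N, hN⟩ := exists_pow_lt_of_lt_one (half_pos hmin)
          (by norm_num : (1/2 : ℝ) < 1)
        obtain ⟨n, hn, hnN⟩ := infinite_exists_ge (hu M) N
        obtain ⟨m, hmM, hmsuf⟩ := hn
        obtain ⟨z, hz, hdz⟩ := HB n b hb
        have hdz2 : dist b z < min ε ((1/2 : ℝ)^M) := by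
          have h1 : (1/2 : ℝ)^n ≤ (1/2)^N :=
            pow_le_pow_of_le_one (by norm_num) (by norm_num) hnN
          calc dist b z < 2 * (1/2 : ℝ)^n := hdz
          _ ≤ 2 * (1/2)^N := by linarith
          _ < min ε ((1/2 : ℝ)^M) := by linarith
        have husufn : u <:+ g n := (List.suffix_cons m u).trans hmsuf
        rcases P.Aset_cases husufn hz with hzu | ⟨t, htgn, hut, hune, hzOF⟩
        · exfalso
          have h1 : Metric.infDist b (P.Aset u) ≤ dist b z :=
            Metric.infDist_le_dist_of_mem hzu
          have h2 : dist b z < ε := lt_of_lt_of_le hdz2 (min_le_left _ _)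
          rw [← hεdef] at h1
          linarith
        · obtain ⟨m', w, hm'suf, hwC, hdzw⟩ := P.new_bound hut hune hzOF
          have hm'm : m' = m := suffix_cons_unique (hm'suf.trans htgn) hmsuf
          subst hm'm
          refine ⟨w, P.C_cons_anti u hmM hwC, ?_⟩
          have h3 : (1/2 : ℝ)^m' ≤ (1/2)^M :=
            pow_le_pow_of_le_one (by norm_num) (by norm_num) hmM
          have h4 : dist b z < (1/2 : ℝ)^M := lt_of_lt_of_le hdz2 (min_le_right _ _)
          calc dist b w ≤ dist b z + dist z w := dist_triangle _ _ _
          _ ≤ (1/2 : ℝ)^M + (1/2)^m' := by linarith [hdzw]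
          _ ≤ 2 * (1/2 : ℝ)^M := by linarith
      have hbC : ∀ M : ℕ, b ∈ P.C (M :: u) := by
        intro M
        rw [← (P.C_closed (M :: u)).closure_eq]
        apply Metric.mem_closure_iff.2
        intro ε' hε'
        obtain ⟨N', hN'⟩ := exists_pow_lt_of_lt_one (half_pos hε')
          (by norm_num : (1/2 : ℝ) < 1)
        obtain ⟨w, hwC, hdw⟩ := key (max M N')
        refine ⟨w, P.C_cons_anti u (le_max_left _ _) hwC, ?_⟩
        have : (1/2 : ℝ)^(max M N') ≤ (1/2)^N' :=
          pow_le_pow_of_le_one (by norm_num) (by norm_num) (le_max_right _ _)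
        calc dist b w ≤ 2 * (1/2 : ℝ)^(max M N') := hdw
        _ ≤ 2 * (1/2)^N' := by linarith
        _ < ε' := by linarith
      exfalso
      apply hbn
      apply P.Om_sub_Aset u
      rw [← P.iInter_C_cons]
      exact Set.mem_iInter.2 hbC
    · exact Hsub u husuf
  · -- branch case: impossible
    exfalso
    set y := P.esc bb with hydef
    have hyB : y ∉ fB := fun h => P.hesc1 bb (hfBr h)
    have hεpos : 0 < Metric.infDist y fB :=
      (hfBcl.notMem_iff_infDist_pos hfBne).1 hyB
    set ε := Metric.infDist y fB with hεdef
    obtain ⟨k, hk⟩ := exists_pow_lt_of_lt_one (half_pos hεpos)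
      (by norm_num : (1/2 : ℝ) < 1)
    have hyP : y ∈ P.Pst (rl bb k) :=
      subset_closure ⟨⟨P.hesc1 bb, P.hesc2 bb⟩, P.esc_mem_C_rl bb k⟩
    obtain ⟨x, hxF, hdx⟩ := (P.Fnet_spec (rl bb k)).2.2.2.1 y hyP
    have hdxk : dist y x ≤ (1/2 : ℝ)^k := by
      refine hdx.trans ((eps_le_len _).trans_eq ?_)
      rw [rl_length]
    obtain ⟨n, hn, hnk⟩ := infinite_exists_ge (hbb k) k
    have hxA : x ∈ P.Aset (g n) := P.Aset_mono hn (P.Fnet_sub_Aset _ hxF)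
    obtain ⟨q, hq, hdq⟩ := Metric.mem_thickening_iff.1 (HA n hxA)
    have h5 : Metric.infDist y fB ≤ dist y q := Metric.infDist_le_dist_of_mem hq
    have h6 : (1/2 : ℝ)^n ≤ (1/2)^k :=
      pow_le_pow_of_le_one (by norm_num) (by norm_num) hnk
    have : dist y q ≤ dist y x + dist x q := dist_triangle _ _ _
    rw [← hεdef] at h5
    have h7 : dist x q < (1/2 : ℝ)^n := hdq
    linarith


include P in
theorem not_hb : ¬ HereditarilyBaire (Hyper X) := by
  intro h
  haveI hb : BaireSpace ↥P.Qset := h P.Qset P.Qset_isClosed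
  obtain ⟨e, he⟩ := exists_surjective_nat (List ℕ)
  set G : ℕ → Set ↥P.Qset := fun n => {K | (K : Hyper X) ≠ P.hyp (e n)} with hGdef
  have hGopen : ∀ n, IsOpen (G n) := by
    intro n
    have : G n = (Subtype.val ⁻¹' {P.hyp (e n)})ᶜ := rfl
    rw [this, isOpen_compl_iff]
    exact (P.isClosed_singleton_hyp _).preimage continuous_subtype_val
  have hGdense : ∀ n, Dense (G n) := by
    intro n x
    by_cases hx : (x : Hyper X) = P.hyp (e n)
    · rw [closure_subtype]
      refine closure_mono
        (show P.Qset \ {P.hyp (e n)} ⊆ Subtype.val '' G n from ?_) ?_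
      · rintro y ⟨hyQ, hy⟩
        exact ⟨⟨y, hyQ⟩, hy, rfl⟩
      · rw [hx]; exact P.not_isolated (e n)
    · exact subset_closure hx
  have hdense := dense_iInter_of_isOpen_nat hGopen hGdense
  haveI : Nonempty ↥P.Qset := ⟨⟨P.hyp [], P.hyp_mem_Qset []⟩⟩
  obtain ⟨K, hK⟩ := hdense.nonempty
  obtain ⟨l, hl⟩ := K.2
  obtain ⟨n, rfl⟩ := he l
  exact (Set.mem_iInter.1 hK n) hl.symm

end Pack




/-! ### Building a `Pack` from the failure of the Menger property of the remainder -/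

theorem build_pack {X Z : Type u} [TopologicalSpace X] [MetricSpace Z] [CompactSpace Z]
    [SecondCountableTopology Z] (f : X → Z) (hf : Topology.IsEmbedding f)
    (hM : ¬ Menger ↥(Set.range f)ᶜ) : Nonempty (Pack X Z) := by
  classical
  rw [Menger] at hM
  push_neg at hM
  obtain ⟨U, hU, hbad⟩ := hM
  haveI hYne : Nonempty ↥(Set.range f)ᶜ := by
    by_contra hempty
    rw [not_nonempty_iff] at hempty
    apply hbad (fun _ => ∅) (fun n => ⟨Set.empty_subset _, Set.finite_empty⟩)
    have h1 : ⋃₀ (⋃ (_ : ℕ), (∅ : Set (Set ↥(Set.range f)ᶜ))) = ∅ := by simp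
    rw [h1, eq_comm, Set.univ_eq_empty_iff]
    exact hempty
  -- open extensions to Z
  have hext : ∀ n (u : {u // u ∈ U n}), ∃ vv : Set Z, IsOpen vv ∧
      Subtype.val ⁻¹' vv = u.1 := by
    intro n u
    exact isOpen_induced_iff.1 ((hU n).1 u.1 u.2)
  choose ext hext1 hext2 using hext
  -- countable subfamilies with the same union
  have hcount : ∀ n, ∃ s : Set {u // u ∈ U n}, s.Countable ∧
      ⋃ u ∈ s, ext n u = ⋃ u, ext n u := fun n =>
    TopologicalSpace.isOpen_iUnion_countable _ (hext1 n)
  choose sel hselc hselU using hcount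
  have hcovall : ∀ n (y : ↥(Set.range f)ᶜ), (y : Z) ∈ ⋃ u, ext n u := by
    intro n y
    have hy : y ∈ ⋃₀ U n := by rw [(hU n).2]; exact Set.mem_univ y
    obtain ⟨u, hu, hyu⟩ := hy
    refine Set.mem_iUnion.2 ⟨⟨u, hu⟩, ?_⟩
    rw [← Set.mem_preimage, hext2 n ⟨u, hu⟩]
    exact hyu
  have hselne : ∀ n, (sel n).Nonempty := by
    intro n
    obtain ⟨y⟩ := hYne
    have h2 := hcovall n y
    rw [← hselU n] at h2
    obtain ⟨u, hu, _⟩ := Set.mem_iUnion₂.1 h2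
    exact ⟨u, hu⟩
  have henum : ∀ n, ∃ e : ℕ → {u // u ∈ U n}, sel n = Set.range e := fun n =>
    ((hselc n).exists_eq_range (hselne n))
  choose e' he' using henum
  set v : ℕ → ℕ → Set Z := fun n j => ext n (e' n j) with hvdef
  have hvcov : ∀ n (y : ↥(Set.range f)ᶜ), ∃ j, (y : Z) ∈ v n j := by
    intro n y
    have h2 := hcovall n y
    rw [← hselU n, he' n, Set.biUnion_range] at h2
    exact Set.mem_iUnion.1 h2
  -- closed pieces exhausting the part of the remainder away from the closure
  set clX := closure (Set.range f) with hclXdef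
  set S : ℕ → Set Z := fun m => {z | ∀ x ∈ Set.range f, (1:ℝ)/(m+1) ≤ dist z x}
    with hSdef
  have hScl : ∀ m, IsClosed (S m) := by
    intro m
    have h2 : S m = ⋂ x ∈ Set.range f, {z | (1:ℝ)/(m+1) ≤ dist z x} := by
      ext z; simp [hSdef]
    rw [h2]
    exact isClosed_biInter (fun x _ =>
      isClosed_le continuous_const (Continuous.dist continuous_id continuous_const))
  have hSY : ∀ m, S m ⊆ (Set.range f)ᶜ := by
    intro m z hz hzr
    have h2 := hz z hzr
    rw [dist_self] at h2
    have : (0:ℝ) < 1/(m+1) := by positivity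
    linarith
  have hScov : ∀ z, z ∉ clX → ∃ m, z ∈ S m := by
    intro z hz
    rcases Set.eq_empty_or_nonempty (Set.range f) with hre | hrne
    · exact ⟨0, fun x hx => absurd hx (by simp [hre])⟩
    · have h2 : ¬ ∀ ε > (0:ℝ), ∃ x ∈ Set.range f, dist z x < ε := by
        intro hcon
        exact hz (Metric.mem_closure_iff.2 hcon)
      push_neg at h2
      obtain ⟨ε, hε, hball⟩ := h2
      obtain ⟨m, hm⟩ := exists_nat_one_div_lt hε
      exact ⟨m, fun x hx => le_trans hm.le (hball x hx)⟩
  by_cases H : ∃ a : ℕ → ℕ, ∀ y : ↥(Set.range f)ᶜ, (y : Z) ∈ clX →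
      ∃ k, ∃ j ≤ a k, (y : Z) ∈ v (2*k) j
  · -- the selections cover: contradiction with `hbad`
    exfalso
    obtain ⟨a, ha⟩ := H
    have hodd : ∀ m : ℕ, ∃ V : Set (Set ↥(Set.range f)ᶜ), V ⊆ U (2*m+1) ∧ V.Finite ∧
        Subtype.val ⁻¹' (S m) ⊆ ⋃₀ V := by
      intro m
      have hcpt : IsCompact (Subtype.val ⁻¹' (S m) : Set ↥(Set.range f)ᶜ) := by
        rw [Topology.IsEmbedding.subtypeVal.isCompact_iff, Subtype.image_preimage_val]
        rw [Set.inter_eq_self_of_subset_right (hSY m)]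
        exact (hScl m).isCompact
      have hcov2 : (Subtype.val ⁻¹' (S m) : Set ↥(Set.range f)ᶜ) ⊆
          ⋃ (u : {u // u ∈ U (2*m+1)}), u.1 := by
        intro y _
        have : y ∈ ⋃₀ U (2*m+1) := by rw [(hU (2*m+1)).2]; exact Set.mem_univ y
        obtain ⟨u, hu, hyu⟩ := this
        exact Set.mem_iUnion.2 ⟨⟨u, hu⟩, hyu⟩
      obtain ⟨t, ht⟩ := hcpt.elim_finite_subcover (fun u : {u // u ∈ U (2*m+1)} => u.1)
        (fun u => (hU (2*m+1)).1 u.1 u.2) hcov2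
      refine ⟨(fun u : {u // u ∈ U (2*m+1)} => u.1) '' ↑t, ?_, (t.finite_toSet.image _), ?_⟩
      · rintro u ⟨u', _, rfl⟩
        exact u'.2
      · intro y hy
        obtain ⟨u, hu, hyu⟩ := Set.mem_iUnion₂.1 (ht hy)
        exact ⟨u.1, ⟨u, hu, rfl⟩, hyu⟩
    choose Vodd hVo1 hVo2 hVo3 using hodd
    set V : ℕ → Set (Set ↥(Set.range f)ᶜ) := fun n =>
      if n % 2 = 0 then (fun j => ((e' n j) : {u // u ∈ U n}).1) '' {j | j ≤ a (n/2)}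
      else Vodd (n/2) with hVdef
    apply hbad V
    · intro n
      by_cases hpar : n % 2 = 0
      · constructor
        · simp only [hVdef, if_pos hpar]
          rintro u ⟨j, _, rfl⟩
          exact (e' n j).2
        · simp only [hVdef, if_pos hpar]
          exact (Set.finite_Iic (a (n/2))).image _
      · constructor
        · simp only [hVdef, if_neg hpar]
          have h2 := hVo1 (n/2)
          rwa [show 2*(n/2)+1 = n from by omega] at h2
        · simp only [hVdef, if_neg hpar]
          exact hVo2 (n/2)
    · rw [Set.eq_univ_iff_forall]
      intro y
      by_cases hyc : (y : Z) ∈ clX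
      · obtain ⟨k, j, hj, hyv⟩ := ha y hyc
        refine ⟨(e' (2*k) j).1, ?_, ?_⟩
        · refine Set.mem_iUnion.2 ⟨2*k, ?_⟩
          simp only [hVdef, if_pos (by omega : (2*k) % 2 = 0)]
          refine ⟨j, ?_, rfl⟩
          simp only [Set.mem_setOf_eq, show (2*k)/2 = k from by omega]
          exact hj
        · rw [← hext2 (2*k) (e' (2*k) j)]
          exact hyv
      · obtain ⟨m, hym⟩ := hScov _ hyc
        have h2 := hVo3 m hym
        obtain ⟨u, hu, hyu⟩ := h2
        refine ⟨u, Set.mem_iUnion.2 ⟨2*m+1, ?_⟩, hyu⟩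
        simp only [hVdef, if_neg (by omega : ¬ (2*m+1) % 2 = 0)]
        rwa [show (2*m+1)/2 = m from by omega]
  · -- build the pack
    push_neg at H
    choose w hw1 hw2 using H
    refine ⟨⟨f, hf, fun n m => (⋃ j ≤ m, v (2*n) j)ᶜ, ?_, ?_, ?_,
      fun a => (w a : Z), fun a => (w a).2, hw1, ?_⟩⟩
    · intro n m
      exact (isOpen_biUnion (fun j _ => hext1 (2*n) _)).isClosed_compl
    · intro n m m' hmm'
      apply Set.compl_subset_compl.2
      apply Set.biUnion_subset_biUnion_left
      intro j hj
      exact le_trans hj hmm'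
    · intro n z hz
      by_contra hzr
      obtain ⟨j, hj⟩ := hvcov (2*n) ⟨z, hzr⟩
      have h2 := Set.mem_iInter.1 hz j
      exact h2 (Set.mem_biUnion (le_refl j) hj)
    · intro a n
      simp only [Set.mem_compl_iff]
      intro hmem
      obtain ⟨j, hj, hmem2⟩ := Set.mem_iUnion₂.1 hmem
      exact hw2 a n j (by simpa using hj) hmem2

end MengerAux



/-- If `X` is separable metrizable and its Vietoris hyperspace `K(X)` is
hereditarily Baire, then for every compact metrizable space `Z` containing `X`
as a subspace, the remainder `Z \ X` is Menger. -/
theorem menger_remainder_of_hyperspace_hereditarilyBaire {X : Type u}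
    [TopologicalSpace X] [TopologicalSpace.SeparableSpace X]
    [TopologicalSpace.MetrizableSpace X]
    (h : HereditarilyBaire (Hyper X)) :
    ∀ (Z : Type u) [TopologicalSpace Z] [CompactSpace Z]
      [TopologicalSpace.MetrizableSpace Z] (f : X → Z),
      Topology.IsEmbedding f → Menger ↥(Set.range f)ᶜ := by
  intro Z _ _ _ f hf
  by_contra hM
  letI : MetricSpace Z := TopologicalSpace.metrizableSpaceMetric Z
  haveI : TopologicalSpace.SeparableSpace Z :=
    TopologicalSpace.isSeparable_univ_iff.1 isCompact_univ.isSeparable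
  haveI : SecondCountableTopology Z := UniformSpace.secondCountable_of_separable Z
  obtain ⟨P⟩ := MengerAux.build_pack f hf hM
  exact P.not_hb h
end

section
/- Every Tychonoff space X that is Menger at infinity is a Baire space. -/
open Set Topology

universe u

section Helpers

variable {Z : Type u} [TopologicalSpace Z]

/-- Regularity shrink: an open set around a point contains a smaller open set
whose closure is inside. -/
lemma shrink_mem [T3Space Z] {U : Set Z} (hU : IsOpen U) {x : Z} (hx : x ∈ U) :
    ∃ O : Set Z, IsOpen O ∧ x ∈ O ∧ closure O ⊆ U := by
  obtain ⟨t, htx, htc, htU⟩ := exists_mem_nhds_isClosed_subset (hU.mem_nhds hx)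
  exact ⟨interior t, isOpen_interior, mem_interior_iff_mem_nhds.2 htx,
    (closure_minimal interior_subset htc).trans htU⟩

/-- A Menger subspace is Lindelöf: from a pointwise assignment of open
neighbourhoods in the ambient space, extract a countable subcover. -/
lemma menger_lindelof [Nonempty Z] {Yset : Set Z} (hM : Menger ↥Yset)
    (H : Z → Set Z) (hHo : ∀ y, IsOpen (H y)) (hHy : ∀ y ∈ Yset, y ∈ H y) :
    ∃ u : ℕ → Z, Yset ⊆ ⋃ m, H (u m) := by
  classical
  obtain ⟨Vs, hVs, hVcov⟩ := hM (fun _ => {v : Set ↥Yset | ∃ y : Z, v = ((Subtype.val : ↥Yset → Z) ⁻¹' (H y))})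
    (by
      intro n
      constructor
      · rintro v ⟨y, rfl⟩
        exact (hHo y).preimage continuous_subtype_val
      · apply eq_univ_iff_forall.2
        intro y
        exact ⟨((Subtype.val : ↥Yset → Z) ⁻¹' (H (y : Z))), ⟨(y : Z), rfl⟩, hHy _ y.2⟩)
  have hw : ∀ n, ∀ v ∈ Vs n, ∃ y : Z, v = ((Subtype.val : ↥Yset → Z) ⁻¹' (H y)) := fun n v hv => (hVs n).1 hv
  set pick : Set ↥Yset → Z := fun v =>
    if h : ∃ y : Z, v = ((Subtype.val : ↥Yset → Z) ⁻¹' (H y)) then h.choose else Classical.arbitrary Z with hpickdef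
  set S : Set Z := ⋃ n, pick '' (Vs n) with hSdef
  have hSc : S.Countable := countable_iUnion (fun n => ((hVs n).2.image _).countable)
  have hcov : Yset ⊆ ⋃ y ∈ S, H y := by
    intro z hz
    have hmem : (⟨z, hz⟩ : ↥Yset) ∈ ⋃₀ (⋃ n, Vs n) := by rw [hVcov]; trivial
    obtain ⟨v, hv, hzv⟩ := hmem
    obtain ⟨n, hvn⟩ := mem_iUnion.1 hv
    have hex : ∃ y : Z, v = ((Subtype.val : ↥Yset → Z) ⁻¹' (H y)) := hw n v hvn
    refine mem_biUnion (mem_iUnion.2 ⟨n, mem_image_of_mem _ hvn⟩) ?_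
    have hpick : pick v = hex.choose := dif_pos hex
    rw [hpick]
    have : (⟨z, hz⟩ : ↥Yset) ∈ ((Subtype.val : ↥Yset → Z) ⁻¹' (H hex.choose)) := hex.choose_spec ▸ hzv
    exact this
  rcases S.eq_empty_or_nonempty with hS | hS
  · refine ⟨fun _ => Classical.arbitrary Z, fun z hz => ?_⟩
    have := hcov hz
    rw [hS] at this
    simp at this
  · obtain ⟨u, hu⟩ := hSc.exists_eq_range hS
    refine ⟨u, fun z hz => ?_⟩
    have := hcov hz
    rw [hu] at this
    simpa using this

end Helpers

section NodeStep

variable {Z : Type u} [TopologicalSpace Z] [CompactSpace Z] [T2Space Z]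

lemma nodeStep {Yset W' : Set Z} {V : ℕ → Set Z}
    (hM : Menger ↥Yset) (hXd : Dense Ysetᶜ)
    (hVo : ∀ n, IsOpen (V n)) (hVd : ∀ n, Dense (V n))
    (hNoLC : ∀ P : Set Z, IsOpen P → P.Nonempty → P ∩ Yset = ∅ → P ⊆ W' → False)
    (R : Set Z) (n : ℕ) (hRo : IsOpen R) (hRne : R.Nonempty) (hRW : R ⊆ W') :
    ∃ (K : Set Z) (Q : ℕ → Set Z),
      IsCompact K ∧ K ∩ Yset = ∅ ∧
      (∀ k, IsOpen (Q k) ∧ (Q k).Nonempty ∧ closure (Q k) ⊆ R ∩ V n) ∧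
      (∀ k l, k ≠ l → closure (Q k) ∩ closure (Q l) = ∅) ∧
      (∀ O : Set Z, IsOpen O → K ⊆ O → ∃ k₀ : ℕ, ∀ k, k₀ ≤ k → closure (Q k) ⊆ O) := by
  classical
  obtain ⟨x, hxR, hxc⟩ := hXd.inter_open_nonempty R hRo hRne
  haveI : Nonempty Z := ⟨x⟩
  -- neighbourhoods of points of Yset avoiding x in closure
  have hH : ∀ y : Z, ∃ Hy : Set Z, IsOpen Hy ∧ x ∉ closure Hy ∧ (y ∈ Yset → y ∈ Hy) := by
    intro y
    by_cases hy : y ∈ Yset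
    · have hyx : y ∈ ({x}ᶜ : Set Z) := by
        simp only [mem_compl_iff, mem_singleton_iff]
        rintro rfl
        exact hxc hy
      obtain ⟨O, hOo, hyO, hOc⟩ := shrink_mem isOpen_compl_singleton hyx
      refine ⟨O, hOo, fun hx' => ?_, fun _ => hyO⟩
      exact (hOc hx') rfl
    · exact ⟨∅, isOpen_empty, by simp, fun h => absurd h hy⟩
  choose H hHo hHx hHy using hH
  obtain ⟨u, hu⟩ := menger_lindelof hM H hHo (fun y hy => hHy y hy)
  -- the shrinking chain
  have hstep : ∀ O : Set Z, ∀ j : ℕ, ∃ O' : Set Z, IsOpen O' ∧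
      ((x ∈ O ∧ IsOpen O) → x ∈ O' ∧ closure O' ⊆ O ∩ (closure (H (u j)))ᶜ) := by
    intro O j
    by_cases h : x ∈ O ∧ IsOpen O
    · obtain ⟨O', h1, h2, h3⟩ :=
        shrink_mem (h.2.inter (isOpen_compl_iff.2 isClosed_closure)) (⟨h.1, hHx (u j)⟩ :
          x ∈ O ∩ (closure (H (u j)))ᶜ)
      exact ⟨O', h1, fun _ => ⟨h2, h3⟩⟩
    · exact ⟨∅, isOpen_empty, fun hh => absurd hh h⟩
  choose cs hcs_open hcs_spec using hstep
  obtain ⟨B0, hB0o, hB0x, hB0cl⟩ := shrink_mem hRo hxR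
  set chain : ℕ → Set Z := fun j => Nat.rec B0 (fun j O => cs O j) j with hchaindef
  have chain_zero : chain 0 = B0 := rfl
  have chain_succ : ∀ j, chain (j + 1) = cs (chain j) j := fun _ => rfl
  have hxin : ∀ j, x ∈ chain j ∧ IsOpen (chain j) := by
    intro j
    induction j with
    | zero => exact ⟨hB0x, hB0o⟩
    | succ j ih =>
        rw [chain_succ]
        exact ⟨(hcs_spec (chain j) j ih).1, hcs_open (chain j) j⟩
  have hnest : ∀ j, closure (chain (j + 1)) ⊆ chain j ∩ (closure (H (u j)))ᶜ := by
    intro j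
    rw [chain_succ]
    exact (hcs_spec (chain j) j (hxin j)).2
  have hmono : ∀ j j', j ≤ j' → chain j' ⊆ chain j := by
    intro j j' hjj
    induction j' with
    | zero => rw [Nat.le_zero.1 hjj]
    | succ j' ih =>
        rcases Nat.lt_or_ge j (j' + 1) with h | h
        · have h1 : chain (j' + 1) ⊆ chain j' :=
            (subset_closure).trans ((hnest j').trans inter_subset_left)
          exact h1.trans (ih (Nat.lt_succ_iff.1 h))
        · rw [Nat.le_antisymm hjj h]
  have hclmono : ∀ j, closure (chain (j + 1)) ⊆ closure (chain j) := by
    intro j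
    exact closure_mono ((subset_closure).trans ((hnest j).trans inter_subset_left))
  have hclmono' : ∀ j j', j ≤ j' → closure (chain j') ⊆ closure (chain j) := by
    intro j j' h
    exact closure_mono (hmono j j' h)
  have hchainR : ∀ j, chain j ⊆ R := fun j =>
    (hmono 0 j (Nat.zero_le _)).trans (subset_closure.trans hB0cl)
  set K : Set Z := ⋂ j, closure (chain j) with hKdef
  have hKcomp : IsCompact K := (isClosed_iInter (fun _ => isClosed_closure)).isCompact
  have hKY : K ∩ Yset = ∅ := by
    apply eq_empty_iff_forall_notMem.2
    rintro y ⟨hyK, hyY⟩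
    obtain ⟨j, hyH⟩ := mem_iUnion.1 (hu hyY)
    have h1 : y ∈ closure (chain (j + 1)) := mem_iInter.1 hyK (j + 1)
    exact ((hnest j) h1).2 (subset_closure hyH)
  -- good levels exist
  have hGood : ∀ M : ℕ, ∃ m, M ≤ m ∧ (chain m ∩ (closure (chain (m + 1)))ᶜ).Nonempty := by
    intro M
    by_contra hc
    push_neg at hc
    have hsub : ∀ m, M ≤ m → chain m ⊆ closure (chain (m + 1)) := by
      intro m hm
      intro z hz
      by_contra hz'
      exact (eq_empty_iff_forall_notMem.1 (hc m hm)) z ⟨hz, hz'⟩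
    have hgrow : ∀ m, M ≤ m → closure (chain M) ⊆ closure (chain m) := by
      intro m hm
      induction m, hm using Nat.le_induction with
      | base => exact subset_rfl
      | succ m hm ih =>
          refine ih.trans ?_
          have := closure_mono (hsub m hm)
          rwa [closure_closure] at this
    have hPK : chain M ⊆ K := by
      intro z hz
      apply mem_iInter.2
      intro j
      rcases le_or_gt j M with h | h
      · exact subset_closure ((hmono j M h) hz)
      · exact hgrow j (Nat.le_of_lt h) (subset_closure hz)
    have hPY : chain M ∩ Yset = ∅ := by
      apply eq_empty_iff_forall_notMem.2
      rintro z ⟨hz1, hz2⟩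
      exact (eq_empty_iff_forall_notMem.1 hKY) z ⟨hPK hz1, hz2⟩
    exact hNoLC (chain M) (hxin M).2 ⟨x, (hxin M).1⟩ hPY ((hchainR M).trans hRW)
  set mseq : ℕ → ℕ := fun k => Nat.rec (hGood 0).choose (fun _ m => (hGood (m + 1)).choose) k
    with hmseqdef
  have mseq_succ : ∀ k, mseq (k + 1) = (hGood (mseq k + 1)).choose := fun _ => rfl
  have hmgood : ∀ k, (chain (mseq k) ∩ (closure (chain (mseq k + 1)))ᶜ).Nonempty := by
    intro k
    cases k with
    | zero => exact (hGood 0).choose_spec.2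
    | succ k => rw [mseq_succ]; exact (hGood (mseq k + 1)).choose_spec.2
  have hmstep : ∀ k, mseq k + 1 ≤ mseq (k + 1) := by
    intro k
    rw [mseq_succ]
    exact (hGood (mseq k + 1)).choose_spec.1
  have hmmono : ∀ k l, k < l → mseq k + 1 ≤ mseq l := by
    intro k l hkl
    induction l with
    | zero => omega
    | succ l ih =>
        rcases Nat.lt_or_ge k l with h | h
        · exact (ih h).trans ((Nat.le_succ _).trans (hmstep l))
        · have : k = l := by omega
          subst this
          exact hmstep k
  have hmge : ∀ k, k ≤ mseq k := by
    intro k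
    induction k with
    | zero => exact Nat.zero_le _
    | succ k ih => calc k + 1 ≤ mseq k + 1 := by omega
                    _ ≤ mseq (k + 1) := hmstep k
  -- the disjoint open pieces
  have hann : ∀ k, ∃ Qk : Set Z, IsOpen Qk ∧ Qk.Nonempty ∧
      closure Qk ⊆ (chain (mseq k) ∩ (closure (chain (mseq k + 1)))ᶜ) ∩ V n := by
    intro k
    have hA : IsOpen (chain (mseq k) ∩ (closure (chain (mseq k + 1)))ᶜ) :=
      ((hxin _).2).inter (isOpen_compl_iff.2 isClosed_closure)
    obtain ⟨p, hp⟩ := (hVd n).inter_open_nonempty _ hA (hmgood k)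
    obtain ⟨Qk, h1, h2, h3⟩ := shrink_mem (hA.inter (hVo n)) hp
    exact ⟨Qk, h1, ⟨p, h2⟩, h3⟩
  choose Q hQo hQne hQcl using hann
  refine ⟨K, Q, hKcomp, hKY, ?_, ?_, ?_⟩
  · intro k
    refine ⟨hQo k, hQne k, ?_⟩
    refine (hQcl k).trans ?_
    refine inter_subset_inter ?_ subset_rfl
    exact (inter_subset_left).trans (hchainR _)
  · have key : ∀ k l, k < l → closure (Q k) ∩ closure (Q l) = ∅ := by
      intro k l hkl
      apply eq_empty_iff_forall_notMem.2
      rintro z ⟨hzk, hzl⟩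
      have h1 : z ∈ (closure (chain (mseq k + 1)))ᶜ := (((hQcl k) hzk).1).2
      have h2 : z ∈ chain (mseq l) := (((hQcl l) hzl).1).1
      exact h1 (subset_closure ((hmono _ _ (hmmono k l hkl)) h2))
    intro k l hkl
    rcases Nat.lt_or_ge k l with h | h
    · exact key k l h
    · have h' : l < k := by omega
      rw [inter_comm]
      exact key l k h'
  · intro O hOo hKO
    have hCC : ∃ j, closure (chain j) ∩ Oᶜ = ∅ := by
      by_contra hc
      push_neg at hc
      have hne : ∀ j, (closure (chain j) ∩ Oᶜ).Nonempty := fun j => hc j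
      have := IsCompact.nonempty_iInter_of_sequence_nonempty_isCompact_isClosed
        (fun j => closure (chain j) ∩ Oᶜ)
        (fun j => inter_subset_inter (hclmono j) subset_rfl)
        hne
        ((isClosed_closure.inter (isClosed_compl_iff.2 hOo)).isCompact)
        (fun j => isClosed_closure.inter (isClosed_compl_iff.2 hOo))
      obtain ⟨z, hz⟩ := this
      have hzK : z ∈ K := mem_iInter.2 (fun j => (mem_iInter.1 hz j).1)
      exact (mem_iInter.1 hz 0).2 (hKO hzK)
    obtain ⟨j, hj⟩ := hCC
    have hjO : closure (chain j) ⊆ O := by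
      intro z hz
      by_contra hz'
      exact (eq_empty_iff_forall_notMem.1 hj) z ⟨hz, hz'⟩
    refine ⟨j, fun k hk => ?_⟩
    refine ((hQcl k).trans ?_)
    intro z hz
    have h1 : z ∈ chain (mseq k) := hz.1.1
    have h2 : z ∈ chain j := (hmono j (mseq k) (le_trans hk (hmge k))) h1
    exact hjO (subset_closure h2)

end NodeStep

section Tree

variable {Z : Type u}

/-- The tree of open regions: children of node `s` are given by `Qf`. -/
noncomputable def mengerTree (Qf : Set Z → ℕ → ℕ → Set Z) (R₀ : Set Z) : List ℕ → Set Z :=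
  fun s => List.rec R₀ (fun k t ih => Qf ih t.length k) s

/-- The diagonal branch in the tree given by a function `g`. -/
def diagNode (g : ℕ → ℕ) : ℕ → List ℕ :=
  fun n => Nat.rec [] (fun m s => g m :: s) n

lemma diagNode_length (g : ℕ → ℕ) : ∀ n, (diagNode g n).length = n := by
  intro n
  induction n with
  | zero => rfl
  | succ n ih => simpa [diagNode] using ih

end Tree

/-- Every Tychonoff space which is Menger at infinity (some compactification
has Menger remainder) is a Baire space. -/
theorem baire_of_menger_at_infinity {X : Type u} [TopologicalSpace X]
    [T35Space X]
    (h : ∃ (Z : Type u) (_ : TopologicalSpace Z),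
      CompactSpace Z ∧ T2Space Z ∧
      ∃ f : X → Z, Topology.IsEmbedding f ∧ DenseRange f ∧
        Menger ↥(Set.range f)ᶜ) :
    BaireSpace X := by
  classical
  obtain ⟨Z, _tZ, hZc, hZt2, f, hfE, hfd, hM⟩ := h
  refine ⟨fun g hgo hgd => ?_⟩
  rw [dense_iff_inter_open]
  intro W hWo hWne
  by_contra hcon
  -- lift everything to the compactification
  have hlift : ∀ n, ∃ v : Set Z, IsOpen v ∧ f ⁻¹' v = g n := fun n =>
    (hfE.toIsInducing.isOpen_iff).1 (hgo n)
  choose Vg hVgo hVgpre using hlift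
  obtain ⟨W', hW'o, hW'pre⟩ := (hfE.toIsInducing.isOpen_iff).1 hWo
  set Yset : Set Z := (Set.range f)ᶜ with hYdef
  have hMY : Menger ↥Yset := hM
  have hXd : Dense Ysetᶜ := by rw [hYdef, compl_compl]; exact hfd
  have hVgd : ∀ n, Dense (Vg n) := by
    intro n
    rw [dense_iff_inter_open]
    intro Tt hTo hTne
    obtain ⟨z, hzT, hzr⟩ := hfd.inter_open_nonempty Tt hTo hTne
    obtain ⟨x, rfl⟩ := hzr
    have h1 : IsOpen (f ⁻¹' Tt) := hTo.preimage hfE.continuous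
    obtain ⟨x', hx'⟩ := (hgd n).inter_open_nonempty _ h1 ⟨x, hzT⟩
    refine ⟨f x', hx'.1, ?_⟩
    have h2 := hx'.2
    rw [← hVgpre n] at h2
    exact h2
  -- a point of (range f) ∩ W' ∩ ⋂ Vg would contradict hcon
  have hconZ : ∀ z : Z, z ∈ Set.range f → z ∈ W' → (∀ n, z ∈ Vg n) → False := by
    rintro z ⟨x, rfl⟩ hzW hzV
    apply hcon
    refine ⟨x, ?_, mem_iInter.2 (fun n => ?_)⟩
    · rw [← hW'pre]; exact hzW
    · rw [← hVgpre n]; exact hzV n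
  -- no open set inside X (relative to W') : otherwise locally compact Baire argument
  have hNoLC : ∀ P : Set Z, IsOpen P → P.Nonempty → P ∩ Yset = ∅ → P ⊆ W' → False := by
    intro P hPo hPne hPY hPW
    haveI : Nonempty ↥P := ⟨⟨hPne.choose, hPne.choose_spec⟩⟩
    haveI := hPo.locallyCompactSpace
    have hdense : ∀ n, Dense ((Subtype.val : ↥P → Z) ⁻¹' (Vg n)) := by
      intro n
      rw [dense_iff_inter_open]
      intro O hOo hOne
      obtain ⟨O', hO'o, hO'pre⟩ := isOpen_induced_iff.1 hOo
      obtain ⟨p, hp⟩ := hOne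
      have hpO' : (p : Z) ∈ O' ∩ P := by
        refine ⟨?_, p.2⟩
        rw [← hO'pre] at hp; exact hp
      obtain ⟨w, hw⟩ := (hVgd n).inter_open_nonempty (O' ∩ P) (hO'o.inter hPo) ⟨p, hpO'⟩
      refine ⟨⟨w, hw.1.2⟩, ⟨?_, hw.2⟩⟩
      rw [← hO'pre]
      exact hw.1.1
    have hD := dense_iInter_of_isOpen (f := fun n => (Subtype.val : ↥P → Z) ⁻¹' (Vg n))
      (fun n => (hVgo n).preimage continuous_subtype_val) hdense
    obtain ⟨z, hz⟩ := hD.nonempty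
    have hzr : (z : Z) ∈ Set.range f := by
      by_contra hzr
      exact (eq_empty_iff_forall_notMem.1 hPY) z ⟨z.2, hzr⟩
    exact hconZ z hzr (hPW z.2) (fun n => mem_iInter.1 hz n)
  -- root region
  have hW'ne : W'.Nonempty := by
    obtain ⟨x₀, hx₀⟩ := hWne
    refine ⟨f x₀, ?_⟩
    rw [← hW'pre] at hx₀; exact hx₀
  obtain ⟨z₀, hz₀⟩ := hW'ne
  obtain ⟨R₀, hR₀o, hR₀z, hR₀cl⟩ := shrink_mem hW'o hz₀
  have hR₀ne : R₀.Nonempty := ⟨z₀, hR₀z⟩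
  have hR₀W : R₀ ⊆ W' := subset_closure.trans hR₀cl
  -- the node-step data
  have step : ∀ (R : Set Z) (n : ℕ), ∃ (K : Set Z) (Q : ℕ → Set Z),
      (IsOpen R ∧ R.Nonempty ∧ R ⊆ W') →
        (IsCompact K ∧ K ∩ Yset = ∅ ∧
         (∀ k, IsOpen (Q k) ∧ (Q k).Nonempty ∧ closure (Q k) ⊆ R ∩ Vg n) ∧
         (∀ k l, k ≠ l → closure (Q k) ∩ closure (Q l) = ∅) ∧
         (∀ O : Set Z, IsOpen O → K ⊆ O → ∃ k₀ : ℕ, ∀ k, k₀ ≤ k → closure (Q k) ⊆ O)) := by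
    intro R n
    by_cases hR : IsOpen R ∧ R.Nonempty ∧ R ⊆ W'
    · obtain ⟨K, Q, h1, h2, h3, h4, h5⟩ :=
        nodeStep hMY hXd hVgo hVgd hNoLC R n hR.1 hR.2.1 hR.2.2
      exact ⟨K, Q, fun _ => ⟨h1, h2, h3, h4, h5⟩⟩
    · exact ⟨∅, fun _ => ∅, fun hh => absurd hh hR⟩
  choose Kf Qf hstep using step
  set T : List ℕ → Set Z := mengerTree Qf R₀ with hTdef
  have hT_nil : T [] = R₀ := rfl
  have hT_cons : ∀ k s, T (k :: s) = Qf (T s) s.length k := fun _ _ => rfl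
  have hcond : ∀ s : List ℕ, IsOpen (T s) ∧ (T s).Nonempty ∧ T s ⊆ W' := by
    intro s
    induction s with
    | nil => exact ⟨hR₀o, hR₀ne, hR₀W⟩
    | cons k s ih =>
        have hs := (hstep (T s) s.length ih).2.2.1 k
        rw [hT_cons]
        exact ⟨hs.1, hs.2.1,
          (subset_closure.trans (hs.2.2.trans inter_subset_left)).trans ih.2.2⟩
  have hchild : ∀ k s, closure (T (k :: s)) ⊆ T s ∩ Vg s.length := by
    intro k s
    rw [hT_cons]
    exact ((hstep (T s) s.length (hcond s)).2.2.1 k).2.2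
  have hdisj0 : ∀ s k l, k ≠ l → closure (T (k :: s)) ∩ closure (T (l :: s)) = ∅ := by
    intro s k l hkl
    rw [hT_cons, hT_cons]
    exact (hstep (T s) s.length (hcond s)).2.2.2.1 k l hkl
  have hKY' : ∀ s : List ℕ, (Kf (T s) s.length) ∩ Yset = ∅ :=
    fun s => (hstep (T s) s.length (hcond s)).2.1
  have hKc' : ∀ s : List ℕ, IsCompact (Kf (T s) s.length) :=
    fun s => (hstep (T s) s.length (hcond s)).1
  have hconv : ∀ s O, IsOpen O → Kf (T s) s.length ⊆ O →
      ∃ k₀, ∀ k, k₀ ≤ k → closure (T (k :: s)) ⊆ O := by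
    intro s O hOo hKO
    obtain ⟨k₀, hk₀⟩ := (hstep (T s) s.length (hcond s)).2.2.2.2 O hOo hKO
    refine ⟨k₀, fun k hk => ?_⟩
    rw [hT_cons]
    exact hk₀ k hk
  -- closures at the same level are pairwise disjoint
  have hlevel : ∀ s t : List ℕ, s.length = t.length → s ≠ t →
      closure (T s) ∩ closure (T t) = ∅ := by
    intro s
    induction s with
    | nil =>
        intro t hlen hst
        exact absurd (List.length_eq_zero_iff.1 hlen.symm).symm hst
    | cons k s ih =>
        intro t hlen hst
        cases t with
        | nil => simp at hlen
        | cons l t =>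
            have hlen' : s.length = t.length := by simpa using hlen
            by_cases hs : s = t
            · subst hs
              have hkl : k ≠ l := fun hkl => hst (by rw [hkl])
              exact hdisj0 s k l hkl
            · apply eq_empty_iff_forall_notMem.2
              rintro z ⟨hz1, hz2⟩
              have h1 : z ∈ closure (T s) := subset_closure ((hchild k s hz1).1)
              have h2 : z ∈ closure (T t) := subset_closure ((hchild l t hz2).1)
              exact (eq_empty_iff_forall_notMem.1 (ih t hlen' hs)) z ⟨h1, h2⟩
  -- local finiteness of each level of the tree, at points of Yset
  have hLF : ∀ z : Z, z ∈ Yset → ∀ n : ℕ, ∃ U : Set Z, IsOpen U ∧ z ∈ U ∧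
      {s : List ℕ | s.length = n ∧ (U ∩ closure (T s)).Nonempty}.Finite := by
    intro z hz n
    induction n with
    | zero =>
        refine ⟨univ, isOpen_univ, mem_univ _, ?_⟩
        refine Set.Finite.subset (finite_singleton ([] : List ℕ)) ?_
        rintro s ⟨hs, -⟩
        simp [List.length_eq_zero_iff.1 hs]
    | succ n ih =>
        obtain ⟨U, hUo, hzU, hSfin⟩ := ih
        have hsep : ∀ s : List ℕ, ∃ N : Set Z, IsOpen N ∧ z ∈ N ∧
            ∃ k₀ : ℕ, ∀ k, k₀ ≤ k → closure (T (k :: s)) ∩ N = ∅ := by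
          intro s
          have hzK : z ∉ Kf (T s) s.length := by
            intro hzK
            exact (eq_empty_iff_forall_notMem.1 (hKY' s)) z ⟨hzK, hz⟩
          have hKcl : IsClosed (Kf (T s) s.length) := (hKc' s).isClosed
          obtain ⟨N, hNo, hzN, hNcl⟩ := shrink_mem hKcl.isOpen_compl hzK
          have hKO : Kf (T s) s.length ⊆ (closure N)ᶜ := fun w hw hwN => (hNcl hwN) hw
          obtain ⟨k₀, hk₀⟩ := hconv s ((closure N)ᶜ) (isOpen_compl_iff.2 isClosed_closure) hKO
          refine ⟨N, hNo, hzN, k₀, fun k hk => ?_⟩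
          apply eq_empty_iff_forall_notMem.2
          rintro w ⟨hw1, hw2⟩
          exact (hk₀ k hk hw1) (subset_closure hw2)
        choose Nf hNo hzN k₀f hk₀f using hsep
        refine ⟨U ∩ ⋂ s ∈ {s : List ℕ | s.length = n ∧ (U ∩ closure (T s)).Nonempty}, Nf s,
          hUo.inter (hSfin.isOpen_biInter (fun s _ => hNo s)),
          ⟨hzU, mem_biInter (fun s _ => hzN s)⟩, ?_⟩
        have hsubset : {s : List ℕ | s.length = n + 1 ∧
            ((U ∩ ⋂ s ∈ {s : List ℕ | s.length = n ∧ (U ∩ closure (T s)).Nonempty}, Nf s)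
              ∩ closure (T s)).Nonempty} ⊆
            ⋃ s ∈ {s : List ℕ | s.length = n ∧ (U ∩ closure (T s)).Nonempty},
              (fun k => k :: s) '' {k | k < k₀f s} := by
          rintro t ⟨htlen, ⟨w, hw1, hw2⟩⟩
          cases t with
          | nil => simp at htlen
          | cons k s =>
              have hslen : s.length = n := by simpa using htlen
              have hsS : s ∈ {s : List ℕ | s.length = n ∧ (U ∩ closure (T s)).Nonempty} :=
                ⟨hslen, ⟨w, hw1.1, subset_closure ((hchild k s hw2).1)⟩⟩
              have hklt : k < k₀f s := by
                by_contra hge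
                push_neg at hge
                have hwN : w ∈ Nf s := mem_iInter₂.1 hw1.2 s hsS
                exact (eq_empty_iff_forall_notMem.1 (hk₀f s k hge)) w ⟨hw2, hwN⟩
              exact mem_biUnion hsS ⟨k, hklt, rfl⟩
        exact Set.Finite.subset (hSfin.biUnion (fun s _ => ((finite_Iio (k₀f s)).image _)))
          hsubset
  -- the limit set and the bad sets
  set Fn : ℕ → Set Z := fun m => ⋃ s ∈ {s : List ℕ | s.length = m}, closure (T s) with hFndef
  set Fset : Set Z := ⋂ m, Fn m with hFsetdef
  set Bad : ℕ → ℕ → Set Z := fun n k =>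
    ⋃ s ∈ {s : List ℕ | s.length = n}, ⋃ j ∈ {j : ℕ | k < j}, closure (T (j :: s)) with hBaddef
  set DD : ℕ → ℕ → Set ↥Yset := fun n k =>
    {y : ↥Yset | ¬((y : Z) ∈ Fset ∧ (y : Z) ∈ Bad n k)} with hDDdef
  -- neighbourhoods witnessing openness of DD
  have hDDnbhd : ∀ n k (y : ↥Yset), y ∈ DD n k → ∃ U : Set Z, IsOpen U ∧ (y : Z) ∈ U ∧
      ∀ w : Z, w ∈ U → ¬(w ∈ Fset ∧ w ∈ Bad n k) := by
    intro n k y hy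
    by_cases hyF : (y : Z) ∈ Fset
    · have hyB : (y : Z) ∉ Bad n k := fun hB => hy ⟨hyF, hB⟩
      have hyFn : (y : Z) ∈ Fn (n + 1) := by
        rw [hFsetdef] at hyF
        exact mem_iInter.1 hyF (n + 1)
      rw [hFndef] at hyFn
      obtain ⟨t₀, ht₀len, hyt₀⟩ := mem_iUnion₂.1 hyFn
      cases t₀ with
      | nil => simp at ht₀len
      | cons j₀ s₀ =>
          have hs₀len : s₀.length = n := by
            have := ht₀len
            simp only [mem_setOf_eq, List.length_cons] at this
            omega
          have hj₀ : j₀ ≤ k := by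
            by_contra hgt
            push_neg at hgt
            apply hyB
            rw [hBaddef]
            exact mem_biUnion (show s₀ ∈ {s : List ℕ | s.length = n} from hs₀len)
              (mem_biUnion (show j₀ ∈ {j : ℕ | k < j} from hgt) hyt₀)
          obtain ⟨U, hUo, hzU, hSfin⟩ := hLF (y : Z) y.2 (n + 1)
          refine ⟨U ∩ ⋂ t ∈ ({s : List ℕ | s.length = n + 1 ∧ (U ∩ closure (T s)).Nonempty}
              \ {j₀ :: s₀}), (closure (T t))ᶜ,
            hUo.inter (hSfin.diff.isOpen_biInter
              (fun t _ => isOpen_compl_iff.2 isClosed_closure)), ⟨hzU, ?_⟩, ?_⟩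
          · apply mem_biInter
            rintro t ⟨htS, hts⟩
            intro hyt
            have htne : t ≠ j₀ :: s₀ := by simpa using hts
            have htlen : t.length = (j₀ :: s₀).length := by
              rw [htS.1]; simp [hs₀len]
            exact (eq_empty_iff_forall_notMem.1 (hlevel t (j₀ :: s₀) htlen htne))
              (y : Z) ⟨hyt, hyt₀⟩
          · rintro w hw ⟨hwF, hwB⟩
            rw [hBaddef] at hwB
            obtain ⟨s, hslen, hrest⟩ := mem_iUnion₂.1 hwB
            obtain ⟨j, hjk, hwcl⟩ := mem_iUnion₂.1 hrest
            have hmem : (j :: s) ∈ {s : List ℕ | s.length = n + 1 ∧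
                (U ∩ closure (T s)).Nonempty} := by
              refine ⟨?_, ⟨w, hw.1, hwcl⟩⟩
              simp only [List.length_cons]
              have : s.length = n := hslen
              omega
            have hne : (j :: s) ≠ j₀ :: s₀ := by
              intro he
              injection he with h1 h2
              have hj : k < j := hjk
              omega
            have hwN : w ∈ (closure (T (j :: s)))ᶜ :=
              mem_iInter₂.1 hw.2 (j :: s) ⟨hmem, by simpa using hne⟩
            exact hwN hwcl
    · have hex : ∃ m, (y : Z) ∉ Fn m := by
        by_contra hc
        push_neg at hc
        exact hyF (by rw [hFsetdef]; exact mem_iInter.2 hc)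
      obtain ⟨m, hm⟩ := hex
      obtain ⟨U, hUo, hzU, hSfin⟩ := hLF (y : Z) y.2 m
      refine ⟨U ∩ ⋂ t ∈ {s : List ℕ | s.length = m ∧ (U ∩ closure (T s)).Nonempty},
          (closure (T t))ᶜ,
        hUo.inter (hSfin.isOpen_biInter (fun t _ => isOpen_compl_iff.2 isClosed_closure)),
        ⟨hzU, ?_⟩, ?_⟩
      · apply mem_biInter
        intro t htS hyt
        apply hm
        rw [hFndef]
        exact mem_biUnion (show t ∈ {s : List ℕ | s.length = m} from htS.1) hyt
      · rintro w hw ⟨hwF, -⟩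
        have hwFn : w ∈ Fn m := by
          rw [hFsetdef] at hwF
          exact mem_iInter.1 hwF m
        rw [hFndef] at hwFn
        obtain ⟨t, htlen, hwt⟩ := mem_iUnion₂.1 hwFn
        have htS : t ∈ {s : List ℕ | s.length = m ∧ (U ∩ closure (T s)).Nonempty} :=
          ⟨htlen, ⟨w, hw.1, hwt⟩⟩
        exact (mem_iInter₂.1 hw.2 t htS) hwt
  have hDDopen : ∀ n k, IsOpen (DD n k) := by
    intro n k
    have h := hDDnbhd n k
    choose! Unb hUnbo hUnbmem hUnbprop using h
    rw [isOpen_induced_iff]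
    refine ⟨⋃ y ∈ DD n k, Unb y, isOpen_biUnion (fun y hy => hUnbo y hy), ?_⟩
    apply Set.ext
    intro y
    constructor
    · intro hyU
      obtain ⟨y', hy', hyU'⟩ := mem_iUnion₂.1 hyU
      exact fun hbad => hUnbprop y' hy' (y : Z) hyU' hbad
    · intro hy
      exact mem_iUnion₂.2 ⟨y, hy, hUnbmem y hy⟩
  have hDDmono : ∀ n k k', k ≤ k' → DD n k ⊆ DD n k' := by
    intro n k k' hkk y hy hbad
    apply hy
    refine ⟨hbad.1, ?_⟩
    have hB := hbad.2
    rw [hBaddef] at hB ⊢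
    obtain ⟨s, hslen, hrest⟩ := mem_iUnion₂.1 hB
    obtain ⟨j, hjk, hwcl⟩ := mem_iUnion₂.1 hrest
    exact mem_biUnion hslen
      (mem_biUnion (show j ∈ {j : ℕ | k < j} from lt_of_le_of_lt hkk hjk) hwcl)
  have hDDcov : ∀ n, ⋃₀ {v : Set ↥Yset | ∃ k, v = DD n k} = univ := by
    intro n
    apply eq_univ_iff_forall.2
    intro y
    by_cases hyF : (y : Z) ∈ Fset
    · have hyFn : (y : Z) ∈ Fn (n + 1) := by
        rw [hFsetdef] at hyF
        exact mem_iInter.1 hyF (n + 1)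
      rw [hFndef] at hyFn
      obtain ⟨t₀, ht₀len, hyt₀⟩ := mem_iUnion₂.1 hyFn
      cases t₀ with
      | nil => simp at ht₀len
      | cons j₀ s₀ =>
          have hs₀len : s₀.length = n := by
            have := ht₀len
            simp only [mem_setOf_eq, List.length_cons] at this
            omega
          refine ⟨DD n j₀, ⟨j₀, rfl⟩, ?_⟩
          rintro ⟨-, hyB⟩
          rw [hBaddef] at hyB
          obtain ⟨s, hslen, hrest⟩ := mem_iUnion₂.1 hyB
          obtain ⟨j, hjk, hycl⟩ := mem_iUnion₂.1 hrest
          have hne : (j :: s) ≠ (j₀ :: s₀) := by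
            intro he
            injection he with h1 h2
            have : j₀ < j := hjk
            omega
          have hlen : (j :: s).length = (j₀ :: s₀).length := by
            simp only [List.length_cons]
            have h1 : s.length = n := hslen
            omega
          exact (eq_empty_iff_forall_notMem.1 (hlevel _ _ hlen hne)) (y : Z) ⟨hycl, hyt₀⟩
    · exact ⟨DD n 0, ⟨0, rfl⟩, fun hbad => hyF hbad.1⟩
  -- apply Menger to the covers DD
  obtain ⟨Vsel, hVsel, hVcov⟩ := hMY (fun n => {v : Set ↥Yset | ∃ k, v = DD n k}) (by
    intro n
    constructor
    · rintro v ⟨k, rfl⟩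
      exact hDDopen n k
    · exact hDDcov n)
  have hidx : ∀ n, ∀ v ∈ Vsel n, ∃ k, v = DD n k := fun n v hv => (hVsel n).1 hv
  have hselK : ∀ n, ∃ K, ∀ v ∈ Vsel n, v ⊆ DD n K := by
    intro n
    choose! kk hkk using hidx n
    refine ⟨((hVsel n).2.toFinset.image kk).sup id, ?_⟩
    intro v hv
    have h2 : kk v ≤ ((hVsel n).2.toFinset.image kk).sup id :=
      Finset.le_sup (f := id) (Finset.mem_image_of_mem _ (((hVsel n).2.mem_toFinset).2 hv))
    rw [hkk v hv]
    exact hDDmono n _ _ h2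
  choose kmax hsel using hselK
  have hcovall : ∀ y : ↥Yset, ∃ n, y ∈ DD n (kmax n) := by
    intro y
    have hmem : y ∈ ⋃₀ (⋃ n, Vsel n) := by rw [hVcov]; trivial
    obtain ⟨v, hv, hyv⟩ := hmem
    obtain ⟨n, hvn⟩ := mem_iUnion.1 hv
    exact ⟨n, hsel n v hvn hyv⟩
  -- the diagonal branch
  set bstar : ℕ → ℕ := fun n => kmax n + 1 with hbdef
  set nodeb : ℕ → List ℕ := diagNode bstar with hnodedef
  have hnode_len : ∀ n, (nodeb n).length = n := diagNode_length bstar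
  have hnode_succ : ∀ n, nodeb (n + 1) = bstar n :: nodeb n := fun _ => rfl
  have hnode_zero : nodeb 0 = [] := rfl
  have hCnested : ∀ n, closure (T (nodeb (n + 1))) ⊆ closure (T (nodeb n)) := by
    intro n
    rw [hnode_succ]
    exact (fun z hz => subset_closure ((hchild (bstar n) (nodeb n) hz).1))
  have hCne : ∀ n, (closure (T (nodeb n))).Nonempty :=
    fun n => ((hcond (nodeb n)).2.1).mono subset_closure
  obtain ⟨w, hwmem⟩ := IsCompact.nonempty_iInter_of_sequence_nonempty_isCompact_isClosed
    (fun n => closure (T (nodeb n))) hCnested hCne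
    (isClosed_closure.isCompact) (fun n => isClosed_closure)
  have hwC : ∀ n, w ∈ closure (T (nodeb n)) := fun n => mem_iInter.1 hwmem n
  have hwW' : w ∈ W' := by
    have h0 : w ∈ closure (T []) := by rw [← hnode_zero]; exact hwC 0
    rw [hT_nil] at h0
    exact hR₀cl h0
  have hwV : ∀ n, w ∈ Vg n := by
    intro n
    have h1 : w ∈ closure (T (bstar n :: nodeb n)) := by
      rw [← hnode_succ]; exact hwC (n + 1)
    have h2 := (hchild (bstar n) (nodeb n)) h1
    rw [hnode_len n] at h2
    exact h2.2
  have hwY : w ∈ Yset := by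
    by_contra hwX
    rw [hYdef, mem_compl_iff, not_not] at hwX
    exact hconZ w hwX hwW' hwV
  obtain ⟨n, hn⟩ := hcovall ⟨w, hwY⟩
  apply hn
  constructor
  · rw [hFsetdef]
    apply mem_iInter.2
    intro m
    rw [hFndef]
    exact mem_biUnion (show nodeb m ∈ {s : List ℕ | s.length = m} from hnode_len m) (hwC m)
  · rw [hBaddef]
    refine mem_biUnion (show nodeb n ∈ {s : List ℕ | s.length = n} from hnode_len n) ?_
    refine mem_biUnion (show bstar n ∈ {j : ℕ | kmax n < j} from Nat.lt_succ_self _) ?_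
    rw [← hnode_succ]
    exact hwC (n + 1)
end

section
/- Let ℱ be a free filter on ℕ, viewed as a subspace of the Cantor set 2^ℕ. If ℱ is a strong P-filter, then the complement 2^ℕ∖ℱ is a Menger space. -/
/-- The Cantor set `2^ℕ`. -/
def Cantor : Type := ℕ → Bool

instance : TopologicalSpace Cantor := inferInstanceAs (TopologicalSpace (ℕ → Bool))

/-- The subset of `ℕ` coded by an element of the Cantor set. -/
def toSet (A : Cantor) : Set ℕ := {n | A n = true}

/-- `F ⊆ 2^ℕ` is a free filter on `ℕ`: it does not contain the empty set,
contains `ℕ`, is upward closed, closed under intersections, and contains all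
cofinite sets. -/
structure IsFreeFilter (F : Set Cantor) : Prop where
  not_empty : ∀ A ∈ F, (toSet A).Nonempty
  univ_mem : (fun _ : ℕ => true) ∈ F
  superset : ∀ A ∈ F, ∀ B : Cantor, toSet A ⊆ toSet B → B ∈ F
  inter : ∀ A ∈ F, ∀ B ∈ F, ∀ C : Cantor, toSet C = toSet A ∩ toSet B → C ∈ F
  cofinite : ∀ A : Cantor, (toSet A)ᶜ.Finite → A ∈ F

/-- `F` is a strong `P`-filter: for every sequence `(𝒞ₙ)` of compact subsets of
`F` there are naturals `0 = k₀ < k₁ < …` such that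
`⋃ₙ (Xₙ ∩ [kₙ, kₙ₊₁)) ∈ F` whenever `Xₙ ∈ 𝒞ₙ` for each `n`. -/
def StrongPFilter (F : Set Cantor) : Prop :=
  ∀ C : ℕ → Set Cantor, (∀ n, IsCompact (C n) ∧ C n ⊆ F) →
    ∃ k : ℕ → ℕ, k 0 = 0 ∧ StrictMono k ∧
      ∀ X : ℕ → Cantor, (∀ n, X n ∈ C n) →
        ∀ Y : Cantor,
          toSet Y = ⋃ n, (toSet (X n) ∩ Set.Ico (k n) (k (n + 1))) → Y ∈ F

/-- `F` is a `P`-filter: every decreasing sequence of members of `F` has a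
pseudo-intersection in `F`. -/
def PFilter (F : Set Cantor) : Prop :=
  ∀ A : ℕ → Cantor, (∀ n, A n ∈ F) →
    (∀ n, toSet (A (n + 1)) ⊆ toSet (A n)) →
    ∃ B ∈ F, ∀ n, (toSet B \ toSet (A n)).Finite

instance : CompactSpace Cantor := inferInstanceAs (CompactSpace (ℕ → Bool))
instance : T2Space Cantor := inferInstanceAs (T2Space (ℕ → Bool))

lemma coord_closed (j : ℕ) (b : Bool) : IsClosed {A : Cantor | A j = b} := by
  have : Continuous (fun A : Cantor => A j) := continuous_apply (A := fun _ : ℕ => Bool) j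
  exact (isClosed_singleton (x := b)).preimage this

/-- every `m` lies in some interval `[k n, k (n+1))` when `k 0 = 0` and `k` is
strictly monotone. -/
lemma exists_interval (k : ℕ → ℕ) (hk0 : k 0 = 0) (hk : StrictMono k) (m : ℕ) :
    ∃ n, k n ≤ m ∧ m < k (n + 1) := by
  classical
  set P : ℕ → Prop := fun j => k j ≤ m with hP
  have hP0 : P 0 := by simp [P, hk0]
  set n := Nat.findGreatest P m with hn
  have hPn : P n := Nat.findGreatest_spec (Nat.zero_le m) hP0
  refine ⟨n, hPn, ?_⟩
  by_contra hlt
  push_neg at hlt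
  have hn1 : n + 1 ≤ m := le_trans (hk.le_apply) hlt
  have : ¬ P (n + 1) :=
    Nat.findGreatest_is_greatest (Nat.lt_succ_self n) hn1
  exact this hlt

/-- If a free filter `F` on `ℕ`, viewed as a subspace of the Cantor set `2^ℕ`,
is a strong `P`-filter, then its complement `2^ℕ \ F` is Menger. -/
theorem menger_compl_of_strongPFilter (F : Set Cantor) (hF : IsFreeFilter F)
    (h : StrongPFilter F) : Menger ↥Fᶜ := by
  classical
  intro U hU
  -- choose open sets of Cantor inducing the cover elements
  have hw : ∀ n (u : Set ↥Fᶜ), ∃ v : Set Cantor,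
      IsOpen v ∧ (u ∈ U n → Subtype.val ⁻¹' v = u) := by
    intro n u
    by_cases hu : u ∈ U n
    · obtain ⟨v, hv, hvu⟩ := isOpen_induced_iff.mp ((hU n).1 u hu)
      exact ⟨v, hv, fun _ => hvu⟩
    · exact ⟨∅, isOpen_empty, fun h' => absurd h' hu⟩
  choose w hwopen hwpre using hw
  set One : Cantor := (fun _ : ℕ => true) with hOne
  set C : ℕ → Set Cantor := fun n => insert One ((⋃ u ∈ U n, w n u)ᶜ) with hCdef
  have hCF : ∀ n, IsCompact (C n) ∧ C n ⊆ F := by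
    intro n
    constructor
    · have hcl : IsClosed (C n) := by
        rw [hCdef]
        simp only [Set.insert_eq]
        exact IsClosed.union isClosed_singleton
          (isClosed_compl_iff.mpr (isOpen_biUnion fun u _ => hwopen n u))
      exact hcl.isCompact
    · intro A hA
      rcases hA with hA | hA
      · rw [hA]; exact hF.univ_mem
      · by_contra hAF
        have hx : (⟨A, hAF⟩ : ↥Fᶜ) ∈ ⋃₀ (U n) := by
          rw [(hU n).2]; trivial
        obtain ⟨u, hu, hxu⟩ := hx
        have : A ∈ w n u := by
          have := hwpre n u hu
          rw [← this] at hxu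
          exact hxu
        exact hA (Set.mem_biUnion hu this)
  obtain ⟨k, hk0, hkm, hkF⟩ := h C hCF
  -- cylinders indexed by traces on [k n, k (n+1))
  set Z : ∀ n : ℕ, (Fin (k (n + 1) - k n) → Bool) → Set Cantor :=
    fun n t => {A : Cantor | ∀ i : Fin (k (n + 1) - k n), A (k n + i) = t i} with hZdef
  set tr : ∀ n : ℕ, Cantor → (Fin (k (n + 1) - k n) → Bool) := fun n B i => B (k n + i) with htr
  -- for each trace whose cylinder misses C n, a finite subfamily covering it
  have key : ∀ n (t : Fin (k (n + 1) - k n) → Bool), ∃ s : Set (Set ↥Fᶜ),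
      s ⊆ U n ∧ s.Finite ∧
      (Z n t ∩ C n = ∅ → ∀ A ∈ Z n t, ∀ hA : A ∉ F, ∃ u ∈ s, (⟨A, hA⟩ : ↥Fᶜ) ∈ u) := by
    intro n t
    by_cases hdis : Z n t ∩ C n = ∅
    · have hZsub : Z n t ⊆ ⋃ u : ↥(U n), w n u := by
        intro A hA
        have hAC : A ∉ C n := by
          intro hAC
          exact absurd (Set.mem_inter hA hAC) (by rw [hdis]; exact id)
        have : A ∈ ⋃ u ∈ U n, w n u := by
          by_contra hAn
          exact hAC (Set.mem_insert_iff.mpr (Or.inr hAn))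
        obtain ⟨u, hu, hAu⟩ := Set.mem_iUnion₂.mp this
        exact Set.mem_iUnion.mpr ⟨⟨u, hu⟩, hAu⟩
      have hZcomp : IsCompact (Z n t) := by
        have hcl : IsClosed (Z n t) := by
          have : Z n t = ⋂ i : Fin (k (n + 1) - k n), {A : Cantor | A (k n + i) = t i} := by
            ext A; simp [hZdef, Set.mem_iInter]
          rw [this]
          exact isClosed_iInter fun i => coord_closed _ _
        exact hcl.isCompact
      obtain ⟨fs, hfs⟩ := hZcomp.elim_finite_subcover (fun u : ↥(U n) => w n u)
        (fun u => hwopen n u) hZsub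
      refine ⟨Subtype.val '' (↑fs : Set ↥(U n)), ?_, (fs.finite_toSet.image _), ?_⟩
      · rintro u ⟨v, _, rfl⟩; exact v.2
      · intro _ A hA hAF
        obtain ⟨v, hvfs, hAv⟩ := Set.mem_iUnion₂.mp (hfs hA)
        refine ⟨(v : Set ↥Fᶜ), ⟨v, hvfs, rfl⟩, ?_⟩
        have := hwpre n v v.2
        rw [← this]
        exact hAv
    · exact ⟨∅, Set.empty_subset _, Set.finite_empty, fun hd => absurd hd hdis⟩
  choose s hssub hsfin hscov using key
  refine ⟨fun n => ⋃ t : Fin (k (n + 1) - k n) → Bool, s n t, ?_, ?_⟩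
  · intro n
    constructor
    · exact Set.iUnion_subset fun t => hssub n t
    · exact Set.finite_iUnion fun t => hsfin n t
  · apply Set.eq_univ_of_forall
    intro x
    set B : Cantor := (x : Cantor) with hB
    have hBF : B ∉ F := x.2
    -- find an n whose cylinder around B misses C n
    have hmain : ∃ n, Z n (tr n B) ∩ C n = ∅ := by
      by_contra hno
      push_neg at hno
      have hne : ∀ n, (Z n (tr n B) ∩ C n).Nonempty := hno
      choose X hX using hne
      have hXC : ∀ n, X n ∈ C n := fun n => (hX n).2
      have hagree : ∀ n m, k n ≤ m → m < k (n + 1) → X n m = B m := by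
        intro n m h1 h2
        have hZ : X n ∈ Z n (tr n B) := (hX n).1
        have hj : m - k n < k (n + 1) - k n := by omega
        have := hZ ⟨m - k n, hj⟩
        simp only [htr] at this
        have hm : k n + (m - k n) = m := by omega
        rw [hm] at this
        exact this
      have hBeq : toSet B = ⋃ n, (toSet (X n) ∩ Set.Ico (k n) (k (n + 1))) := by
        ext m
        constructor
        · intro hm
          obtain ⟨n, h1, h2⟩ := exists_interval k hk0 hkm m
          refine Set.mem_iUnion.mpr ⟨n, ?_, h1, h2⟩
          show X n m = true
          rw [hagree n m h1 h2]; exact hm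
        · intro hm
          obtain ⟨n, hXm, h1, h2⟩ := Set.mem_iUnion.mp hm
          show B m = true
          rw [← hagree n m h1 h2]; exact hXm
      exact hBF (hkF X hXC B hBeq)
    obtain ⟨n, hn⟩ := hmain
    have hBZ : B ∈ Z n (tr n B) := fun i => rfl
    obtain ⟨u, hus, hxu⟩ := hscov n (tr n B) hn B hBZ hBF
    refine Set.mem_sUnion.mpr ⟨u, ?_, ?_⟩
    · exact Set.mem_iUnion.mpr ⟨n, Set.mem_iUnion.mpr ⟨tr n B, hus⟩⟩
    · have : (⟨B, hBF⟩ : ↥Fᶜ) = x := Subtype.ext rfl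
      rw [← this]
      exact hxu
end

section
/- Let ℱ be a free filter on ℕ, viewed as a subspace of the Cantor set 2^ℕ. If the hyperspace K(ℱ) with the Vietoris topology is hereditarily Baire, then ℱ is a strong P-filter. -/
namespace SPF
open Set Topology Filter
open scoped Classical

instance : T2Space Cantor := inferInstanceAs (T2Space (ℕ → Bool))
instance : CompactSpace Cantor := inferInstanceAs (CompactSpace (ℕ → Bool))
instance : FirstCountableTopology Cantor :=
  inferInstanceAs (FirstCountableTopology (ℕ → Bool))


noncomputable def idx (R : Set ℕ) (n : ℕ) : ℕ :=
  Nat.count (· ∈ R) (n + 1) - 1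


lemma count_congr {p q : ℕ → Prop} [DecidablePred p] [DecidablePred q] :
    ∀ {n : ℕ}, (∀ i < n, (p i ↔ q i)) → Nat.count p n = Nat.count q n := by
  intro n
  induction n with
  | zero => intro; rfl
  | succ n ih =>
    intro h
    rw [Nat.count_succ, Nat.count_succ, ih (fun i hi => h i (hi.trans (Nat.lt_succ_self n)))]
    by_cases hp : p n
    · rw [if_pos hp, if_pos ((h n (Nat.lt_succ_self n)).1 hp)]
    · rw [if_neg hp, if_neg (fun hq => hp ((h n (Nat.lt_succ_self n)).2 hq))]

lemma idx_congr {R R' : Set ℕ} {B : ℕ} (h : ∀ i < B, (i ∈ R ↔ i ∈ R')) {n : ℕ}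
    (hn : n < B) : idx R n = idx R' n := by
  unfold idx
  congr 1
  exact count_congr (fun i hi => h i (lt_of_lt_of_le hi hn))

lemma idx_spec {R : Set ℕ} (hR : R.Infinite) (h0 : 0 ∈ R) (n : ℕ) :
    Nat.nth (· ∈ R) (idx R n) ≤ n ∧ n < Nat.nth (· ∈ R) (idx R n + 1) := by
  have hset : setOf (· ∈ R) = R := rfl
  have hinf : (setOf (· ∈ R)).Infinite := by rw [hset]; exact hR
  have hcpos : 0 < Nat.count (· ∈ R) (n + 1) := by
    have h := Nat.count_strict_mono (p := (· ∈ R)) h0 (Nat.succ_pos n)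
    simpa using h
  have hidx : idx R n + 1 = Nat.count (· ∈ R) (n + 1) := by
    unfold idx
    omega
  constructor
  · have : idx R n < Nat.count (· ∈ R) (n + 1) := by omega
    have := Nat.nth_lt_of_lt_count this
    omega
  · have h1 : n + 1 ≤ Nat.nth (· ∈ R) (Nat.count (· ∈ R) (n + 1)) :=
      Nat.le_nth_count hinf (n + 1)
    rw [← hidx] at h1
    omega

/-- Two subsets of Cantor space "agree up to `B`". -/
def Agree (B : ℕ) (K K' : Set Cantor) : Prop :=
  (∀ a ∈ K, ∃ b ∈ K', ∀ i < B, a i = b i) ∧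
  (∀ b ∈ K', ∃ a ∈ K, ∀ i < B, a i = b i)

lemma Agree.refl (B : ℕ) (K : Set Cantor) : Agree B K K :=
  ⟨fun a ha => ⟨a, ha, fun _ _ => rfl⟩, fun a ha => ⟨a, ha, fun _ _ => rfl⟩⟩

lemma Agree.symm {B : ℕ} {K K' : Set Cantor} (h : Agree B K K') : Agree B K' K :=
  ⟨fun b hb => (h.2 b hb).imp (fun a ⟨ha, hag⟩ => ⟨ha, fun i hi => (hag i hi).symm⟩),
   fun a ha => (h.1 a ha).imp (fun b ⟨hb, hag⟩ => ⟨hb, fun i hi => (hag i hi).symm⟩)⟩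

lemma Agree.trans {B : ℕ} {K K' K'' : Set Cantor} (h : Agree B K K') (h' : Agree B K' K'') :
    Agree B K K'' := by
  constructor
  · intro a ha
    obtain ⟨b, hb, hab⟩ := h.1 a ha
    obtain ⟨c, hc, hbc⟩ := h'.1 b hb
    exact ⟨c, hc, fun i hi => (hab i hi).trans (hbc i hi)⟩
  · intro c hc
    obtain ⟨b, hb, hbc⟩ := h'.2 c hc
    obtain ⟨a, ha, hab⟩ := h.2 b hb
    exact ⟨a, ha, fun i hi => (hab i hi).trans (hbc i hi)⟩

lemma Agree.mono {B B' : ℕ} {K K' : Set Cantor} (hBB : B' ≤ B) (h : Agree B K K') :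
    Agree B' K K' :=
  ⟨fun a ha => (h.1 a ha).imp (fun b ⟨hb, hag⟩ => ⟨hb, fun i hi => hag i (lt_of_lt_of_le hi hBB)⟩),
   fun b hb => (h.2 b hb).imp (fun a ⟨ha, hag⟩ => ⟨ha, fun i hi => hag i (lt_of_lt_of_le hi hBB)⟩)⟩

lemma mem_of_agree_all {K' : Set Cantor} (hK' : IsClosed K') {a : Cantor}
    (h : ∀ B : ℕ, ∃ b ∈ K', ∀ i < B, a i = b i) : a ∈ K' := by
  choose g hgK hg using h
  have : Filter.Tendsto g Filter.atTop (nhds a) := by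
    apply tendsto_pi_nhds.2
    intro i
    apply tendsto_nhds_of_eventually_eq
    filter_upwards [Filter.eventually_ge_atTop (i + 1)] with B hB
    exact (hg B i (by omega)).symm
  exact hK'.mem_of_tendsto this (Filter.Eventually.of_forall hgK)

lemma eq_of_agree_all {K K' : Set Cantor} (hK : IsClosed K) (hK' : IsClosed K')
    (h : ∀ B : ℕ, Agree B K K') : K = K' := by
  ext a
  constructor
  · intro ha
    exact mem_of_agree_all hK' (fun B => (h B).1 a ha)
  · intro ha
    apply mem_of_agree_all hK
    intro B
    obtain ⟨b, hb, hba⟩ := (h B).2 a ha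
    exact ⟨b, hb, fun i hi => (hba i hi).symm⟩

section LSet

variable (C : ℕ → Set Cantor)

/-- The compact set of all "block-unions" of selections from `C` with blocks given by `R`. -/
def LSet (R : Set ℕ) : Set Cantor :=
  {Y | ∃ X : ℕ → Cantor, (∀ i, X i ∈ C i) ∧ ∀ n, Y n = X (idx R n) n}

lemma LSet_eq_image (R : Set ℕ) :
    LSet C R = (fun X : ℕ → Cantor => (fun n => X (idx R n) n : Cantor)) ''
      (Set.pi Set.univ C) := by
  ext Y
  constructor
  · rintro ⟨X, hX, hY⟩
    exact ⟨X, fun i _ => hX i, funext (fun n => (hY n).symm)⟩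
  · rintro ⟨X, hX, hY⟩
    exact ⟨X, fun i => hX i (Set.mem_univ i), fun n => congrFun hY.symm n⟩

lemma LSet_isCompact (hC : ∀ n, IsCompact (C n)) (R : Set ℕ) : IsCompact (LSet C R) := by
  rw [LSet_eq_image]
  apply (isCompact_univ_pi hC).image
  exact continuous_pi fun n => (continuous_apply n).comp (continuous_apply (idx R n))

lemma LSet_isClosed (hC : ∀ n, IsCompact (C n)) (R : Set ℕ) : IsClosed (LSet C R) :=
  (LSet_isCompact C hC R).isClosed

lemma LSet_nonempty (hne : ∀ n, (C n).Nonempty) (R : Set ℕ) : (LSet C R).Nonempty := by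
  choose X hX using hne
  exact ⟨fun n => X (idx R n) n, X, hX, fun _ => rfl⟩

lemma LSet_agree {R R' : Set ℕ} {B : ℕ} (h : ∀ i < B, (i ∈ R ↔ i ∈ R')) :
    Agree B (LSet C R) (LSet C R') := by
  constructor
  · rintro Y ⟨X, hX, hY⟩
    refine ⟨fun n => X (idx R' n) n, ⟨X, hX, fun _ => rfl⟩, fun i hi => ?_⟩
    show Y i = X (idx R' i) i
    rw [hY i, idx_congr h hi]
  · rintro Y ⟨X, hX, hY⟩
    refine ⟨fun n => X (idx R n) n, ⟨X, hX, fun _ => rfl⟩, fun i hi => ?_⟩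
    show X (idx R i) i = Y i
    rw [hY i, idx_congr h hi]

lemma LSet_subset_F {F : Set Cantor} (hF : IsFreeFilter F) (hCF : ∀ n, C n ⊆ F)
    {R : Set ℕ} (hRfin : R.Finite) : LSet C R ⊆ F := by
  rintro Y ⟨X, hX, hY⟩
  obtain ⟨M, hM⟩ : ∃ M : ℕ, ∀ m ∈ R, m < M := by
    obtain ⟨M, hM⟩ := hRfin.bddAbove
    exact ⟨M + 1, fun m hm => Nat.lt_succ_of_le (hM hm)⟩
  have key : ∀ d, Nat.count (· ∈ R) (M + 1 + d) = Nat.count (· ∈ R) (M + 1) := by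
    intro d
    induction d with
    | zero => rfl
    | succ d ih =>
      rw [← Nat.add_assoc, Nat.count_succ, if_neg (fun hmem => by have := hM _ hmem; omega),
        add_zero]
      exact ih
  have hcount : ∀ n, M ≤ n → idx R n = idx R M := by
    intro n hn
    unfold idx
    congr 1
    rw [show n + 1 = M + 1 + (n - M) by omega]
    exact key _
  set j := idx R M with hj
  set E : Cantor := fun n => X j n && decide (M ≤ n) with hE
  have hEF : E ∈ F := by
    set Ind : Cantor := fun n => decide (M ≤ n) with hInd
    have hIndF : Ind ∈ F := by
      apply hF.cofinite
      apply Set.Finite.subset (Set.finite_Iio M)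
      intro n hn
      simp only [toSet, Set.mem_compl_iff, Set.mem_setOf_eq, hInd, decide_eq_true_eq] at hn
      simpa using hn
    apply hF.inter (X j) (hCF j (hX j)) Ind hIndF
    ext n
    simp [toSet, hE, hInd, Bool.and_eq_true]
  apply hF.superset E hEF
  intro n hn
  simp only [toSet, hE, Bool.and_eq_true, decide_eq_true_eq, Set.mem_setOf_eq] at hn ⊢
  rw [hY n, hcount n hn.2]
  exact hn.1

end LSet

section HyperMachinery

variable {F : Set Cantor}

/-- The underlying compact subset of Cantor space of a point of the hyperspace. -/
def shadow (K : Hyper ↥F) : Set Cantor := Subtype.val '' K.1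

lemma shadow_isCompact (K : Hyper ↥F) : IsCompact (shadow K) :=
  K.2.1.image continuous_subtype_val

lemma shadow_isClosed (K : Hyper ↥F) : IsClosed (shadow K) :=
  (shadow_isCompact K).isClosed

lemma shadow_nonempty (K : Hyper ↥F) : (shadow K).Nonempty :=
  K.2.2.image _

lemma shadow_subset (K : Hyper ↥F) : shadow K ⊆ F := by
  rintro _ ⟨x, _, rfl⟩
  exact x.2

lemma shadow_inj {K K' : Hyper ↥F} (h : shadow K = shadow K') : K = K' := by
  apply Subtype.ext
  apply Set.ext
  intro x
  constructor
  · intro hx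
    have : (x : Cantor) ∈ shadow K' := h ▸ ⟨x, hx, rfl⟩
    obtain ⟨y, hy, hval⟩ := this
    rwa [← Subtype.ext hval]
  · intro hx
    have : (x : Cantor) ∈ shadow K := h ▸ ⟨x, hx, rfl⟩
    obtain ⟨y, hy, hval⟩ := this
    rwa [← Subtype.ext hval]

/-- Cylinder: all points of Cantor space agreeing with `a` below `B`. -/
def cyl (a : Cantor) (B : ℕ) : Set Cantor := {y | ∀ i < B, y i = a i}

lemma self_mem_cyl (a : Cantor) (B : ℕ) : a ∈ cyl a B := fun _ _ => rfl

lemma isOpen_cyl (a : Cantor) (B : ℕ) : IsOpen (cyl a B) := by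
  have : cyl a B = ⋂ i ∈ Finset.range B, (fun y : Cantor => y i) ⁻¹' {a i} := by
    ext y
    simp [cyl, Set.mem_iInter]
  rw [this]
  apply isOpen_biInter_finset
  intro i _
  exact (isOpen_discrete ({a i} : Set Bool)).preimage (continuous_apply i)

/-- The generating family of the Vietoris topology. -/
def vgen (F : Set Cantor) : Set (Set (Hyper ↥F)) :=
  {s | ∃ U : Set ↥F, IsOpen U ∧ s = {K : Hyper ↥F | K.1 ⊆ U}} ∪
    {s | ∃ U : Set ↥F, IsOpen U ∧ s = {K : Hyper ↥F | (K.1 ∩ U).Nonempty}}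

lemma isOpen_vgen {s : Set (Hyper ↥F)} (hs : s ∈ vgen F) : IsOpen s :=
  TopologicalSpace.isOpen_generateFrom_of_mem hs

/-- Agreement balls around a point of the hyperspace. -/
def hball (K : Hyper ↥F) (B : ℕ) : Set (Hyper ↥F) :=
  {K' | Agree B (shadow K) (shadow K')}

lemma exists_cyl_subset {U₀ : Set Cantor} (hU₀ : IsOpen U₀) {a : Cantor} (ha : a ∈ U₀) :
    ∃ B : ℕ, cyl a B ⊆ U₀ := by
  obtain ⟨I, u, hu, hsub⟩ := isOpen_pi_iff.mp hU₀ a ha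
  refine ⟨I.sup id + 1, fun y hy => hsub ?_⟩
  intro i hi
  have h1 : y i = a i := hy i (by
    have : i ≤ I.sup id := Finset.le_sup (f := id) hi
    omega)
  rw [h1]
  exact (hu i hi).2

/-- Every open set containing `K` contains an agreement ball. -/
lemma exists_hball_subset {O : Set (Hyper ↥F)} (hO : IsOpen O) {K : Hyper ↥F} (hK : K ∈ O) :
    ∃ B, hball K B ⊆ O := by
  suffices h : ∀ O : Set (Hyper ↥F), TopologicalSpace.GenerateOpen (vgen F) O →
      ∀ K : Hyper ↥F, K ∈ O → ∃ B, hball K B ⊆ O by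
    exact h O hO K hK
  clear hO hK O K
  intro O hO
  induction hO with
  | basic s hs =>
    intro K hK
    rcases hs with ⟨U, hU, rfl⟩ | ⟨U, hU, rfl⟩
    · -- {K | K.1 ⊆ U}
      obtain ⟨U₀, hU₀, hpre⟩ := isOpen_induced_iff.mp hU
      have hsh : shadow K ⊆ U₀ := by
        rintro _ ⟨x, hx, rfl⟩
        have : x ∈ U := hK hx
        rw [← hpre] at this
        exact this
      have hch : ∀ a : ↥(shadow K), ∃ B : ℕ, cyl ↑a B ⊆ U₀ :=
        fun a => exists_cyl_subset hU₀ (hsh a.2)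
      choose Bf hBf using hch
      obtain ⟨t, ht⟩ := (shadow_isCompact K).elim_finite_subcover
        (fun a : ↥(shadow K) => cyl ↑a (Bf a)) (fun a => isOpen_cyl _ _)
        (fun a ha => Set.mem_iUnion.2 ⟨⟨a, ha⟩, self_mem_cyl _ _⟩)
      refine ⟨t.sup Bf, fun K' hK' => ?_⟩
      intro x hx
      have hxs : (x : Cantor) ∈ shadow K' := ⟨x, hx, rfl⟩
      obtain ⟨a, ha, hag⟩ := hK'.2 _ hxs
      obtain ⟨i, hit, hicyl⟩ : ∃ i ∈ t, a ∈ cyl ↑i (Bf i) := by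
        have := ht ha
        simpa using this
      have hBfi : Bf i ≤ t.sup Bf := Finset.le_sup hit
      have : (x : Cantor) ∈ cyl ↑i (Bf i) := by
        intro j hj
        rw [← hag j (lt_of_lt_of_le hj hBfi)]
        exact hicyl j hj
      have hxU₀ : (x : Cantor) ∈ U₀ := hBf i this
      rw [← hpre]
      exact hxU₀
    · -- {K | (K.1 ∩ U).Nonempty}
      obtain ⟨U₀, hU₀, hpre⟩ := isOpen_induced_iff.mp hU
      obtain ⟨x, hxK, hxU⟩ := hK
      have hxU₀ : (x : Cantor) ∈ U₀ := by rw [← hpre] at hxU; exact hxU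
      obtain ⟨B, hB⟩ := exists_cyl_subset hU₀ hxU₀
      refine ⟨B, fun K' hK' => ?_⟩
      obtain ⟨b, hb, hag⟩ := hK'.1 _ ⟨x, hxK, rfl⟩
      obtain ⟨y, hy, rfl⟩ := hb
      refine ⟨y, hy, ?_⟩
      rw [← hpre]
      apply hB
      intro j hj
      exact (hag j hj).symm
  | univ =>
    intro K _
    exact ⟨0, fun _ _ => trivial⟩
  | inter s₁ s₂ _ _ ih₁ ih₂ =>
    intro K hK
    obtain ⟨B₁, hB₁⟩ := ih₁ K hK.1
    obtain ⟨B₂, hB₂⟩ := ih₂ K hK.2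
    exact ⟨max B₁ B₂, fun K' hK' =>
      ⟨hB₁ (hK'.mono (le_max_left B₁ B₂)), hB₂ (hK'.mono (le_max_right B₁ B₂))⟩⟩
  | sUnion S _ ih =>
    rintro K ⟨s, hsS, hKs⟩
    obtain ⟨B, hB⟩ := ih s hsS K hKs
    exact ⟨B, fun K' hK' => ⟨s, hsS, hB hK'⟩⟩

/-- Agreement balls are neighborhoods. -/
lemma hball_mem_nhds (K : Hyper ↥F) (B : ℕ) : hball K B ∈ nhds K := by
  obtain ⟨t, ht⟩ := (shadow_isCompact K).elim_finite_subcover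
    (fun a : ↥(shadow K) => cyl ↑a B) (fun a => isOpen_cyl _ _)
    (fun a ha => Set.mem_iUnion.2 ⟨⟨a, ha⟩, self_mem_cyl _ _⟩)
  set U₀ : Set Cantor := ⋃ i ∈ t, cyl ↑i B with hU₀def
  have hU₀open : IsOpen U₀ := isOpen_biUnion (fun i _ => isOpen_cyl _ _)
  set V : Set (Hyper ↥F) :=
    {K' | K'.1 ⊆ Subtype.val ⁻¹' U₀} ∩
      ⋂ i ∈ t, {K' | (K'.1 ∩ Subtype.val ⁻¹' (cyl ↑i B)).Nonempty} with hVdef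
  have hVopen : IsOpen V := by
    apply IsOpen.inter
    · exact isOpen_vgen (Or.inl ⟨_, hU₀open.preimage continuous_subtype_val, rfl⟩)
    · exact isOpen_biInter_finset fun i _ =>
        isOpen_vgen (Or.inr ⟨_, (isOpen_cyl (↑i) B).preimage continuous_subtype_val, rfl⟩)
  have hKV : K ∈ V := by
    constructor
    · intro x hx
      have : (x : Cantor) ∈ shadow K := ⟨x, hx, rfl⟩
      exact ht this
    · apply Set.mem_biInter
      intro i hit
      obtain ⟨x, hx, hval⟩ := i.2
      exact ⟨x, hx, by show (x : Cantor) ∈ cyl ↑i B; rw [hval]; exact self_mem_cyl _ _⟩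
  have hVsub : V ⊆ hball K B := by
    rintro K' ⟨h1, h2⟩
    constructor
    · intro a ha
      have ha' : a ∈ ⋃ i ∈ t, cyl (↑i) B := by rw [← hU₀def]; exact ht ha
      obtain ⟨i, hit, hicyl⟩ := Set.mem_iUnion₂.mp ha'
      obtain ⟨y, hyK', hycyl⟩ := Set.mem_iInter₂.mp h2 i hit
      refine ⟨↑y, ⟨y, hyK', rfl⟩, fun j hj => ?_⟩
      rw [hicyl j hj, hycyl j hj]
    · rintro _ ⟨x, hxK', rfl⟩
      have hxU₀ : (x : Cantor) ∈ U₀ := h1 hxK'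
      have hx' : (x : Cantor) ∈ ⋃ i ∈ t, cyl (↑i) B := by rw [← hU₀def]; exact hxU₀
      obtain ⟨i, hit, hicyl⟩ := Set.mem_iUnion₂.mp hx'
      exact ⟨↑i, i.2, fun j hj => (hicyl j hj).symm⟩
  exact Filter.mem_of_superset (hVopen.mem_nhds hKV) hVsub

end HyperMachinery

section Derived

variable {F : Set Cantor}

lemma isOpen_agreeBall (S : Set Cantor) (B : ℕ) :
    IsOpen {K : Hyper ↥F | Agree B (shadow K) S} := by
  rw [isOpen_iff_mem_nhds]
  intro K hK
  filter_upwards [hball_mem_nhds K B] with K' hK'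
  exact hK'.symm.trans hK

lemma isClosed_singleton_hyper (K₀ : Hyper ↥F) : IsClosed ({K₀} : Set (Hyper ↥F)) := by
  rw [← isOpen_compl_iff, isOpen_iff_mem_nhds]
  intro K hK
  have hne : K ≠ K₀ := by simpa using hK
  have hB : ∃ B, ¬ Agree B (shadow K) (shadow K₀) := by
    by_contra hcon
    push_neg at hcon
    exact hne (shadow_inj (eq_of_agree_all (shadow_isClosed K) (shadow_isClosed K₀) hcon))
  obtain ⟨B, hB⟩ := hB
  filter_upwards [hball_mem_nhds K B] with K' hK'
  simp only [Set.mem_compl_iff, Set.mem_singleton_iff]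
  rintro rfl
  exact hB hK'

/-- Package a compact nonempty subset of `F` as a point of the hyperspace of `↥F`. -/
def hyperOf (S : Set Cantor) (h1 : IsCompact S) (h2 : S.Nonempty) (h3 : S ⊆ F) :
    Hyper ↥F :=
  ⟨Subtype.val ⁻¹' S, by
    rw [Subtype.isCompact_iff, Set.image_preimage_eq_inter_range, Subtype.range_coe,
      Set.inter_eq_self_of_subset_left h3]
    exact h1, by
    obtain ⟨y, hy⟩ := h2
    exact ⟨⟨y, h3 hy⟩, hy⟩⟩

lemma shadow_hyperOf (S : Set Cantor) (h1 : IsCompact S) (h2 : S.Nonempty) (h3 : S ⊆ F) :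
    shadow (hyperOf S h1 h2 h3) = S := by
  show Subtype.val '' (Subtype.val ⁻¹' S) = S
  rw [Set.image_preimage_eq_inter_range, Subtype.range_coe,
    Set.inter_eq_self_of_subset_left h3]

end Derived

section Nodes

variable {F : Set Cantor} {C : ℕ → Set Cantor}
variable (hF : IsFreeFilter F) (hC : ∀ n, IsCompact (C n)) (hCF : ∀ n, C n ⊆ F)
  (hne : ∀ n, (C n).Nonempty)

/-- The point of the hyperspace corresponding to a finite block structure `R`. -/
noncomputable def node (R : Finset ℕ) : Hyper ↥F :=
  hyperOf (LSet C ↑R) (LSet_isCompact C hC ↑R) (LSet_nonempty C hne ↑R)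
    (LSet_subset_F C hF hCF (R.finite_toSet))

lemma shadow_node (R : Finset ℕ) : shadow (node hF hC hCF hne R) = LSet C ↑R :=
  shadow_hyperOf _ _ _ _

/-- The countable set of "nodes". -/
def nodes : Set (Hyper ↥F) :=
  {K | ∃ R : Finset ℕ, 0 ∈ R ∧ K = node hF hC hCF hne R}

/-- The closure of the set of nodes: a closed subspace of the hyperspace. -/
def Dom : Set (Hyper ↥F) := closure (nodes hF hC hCF hne)

lemma exists_node_near {K : Hyper ↥F} (hK : K ∈ Dom hF hC hCF hne) (B : ℕ) :
    ∃ R : Finset ℕ, 0 ∈ R ∧ Agree B (shadow K) (LSet C ↑R) := by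
  rw [Dom, mem_closure_iff_nhds] at hK
  obtain ⟨K', hK'ball, R, h0R, rfl⟩ := hK _ (hball_mem_nhds K B)
  refine ⟨R, h0R, ?_⟩
  rw [← shadow_node hF hC hCF hne R]
  exact hK'ball

include hF hC hCF hne in
theorem main_key (h : HereditarilyBaire (Hyper ↥F)) :
    ∃ R : Set ℕ, R.Infinite ∧ 0 ∈ R ∧ LSet C R ⊆ F := by
  by_contra hbad
  push_neg at hbad
  set 𝒟 : Set (Hyper ↥F) := Dom hF hC hCF hne with h𝒟
  have hBaire : BaireSpace ↥𝒟 := h 𝒟 isClosed_closure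
  -- the two families of dense open sets
  set Dset : ℕ → Set ↥𝒟 := fun n =>
    {x | ∃ R : Finset ℕ, 0 ∈ R ∧ n ≤ R.sup id ∧
      Agree (R.sup id + 1) (shadow x.1) (LSet C ↑R)} with hDset
  set Eset : Finset ℕ → Set ↥𝒟 := fun R =>
    {x | x.1 ≠ node hF hC hCF hne (insert 0 R)} with hEset
  have hDopen : ∀ n, IsOpen (Dset n) := by
    intro n
    have : Dset n = Subtype.val ⁻¹'
        (⋃ R : {R : Finset ℕ // 0 ∈ R ∧ n ≤ R.sup id},
          {K : Hyper ↥F | Agree (R.1.sup id + 1) (shadow K) (LSet C ↑R.1)}) := by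
      ext x
      simp only [hDset, Set.mem_setOf_eq, Set.mem_preimage, Set.mem_iUnion]
      constructor
      · rintro ⟨R, h0, hn, hag⟩
        exact ⟨⟨R, h0, hn⟩, hag⟩
      · rintro ⟨⟨R, h0, hn⟩, hag⟩
        exact ⟨R, h0, hn, hag⟩
    rw [this]
    exact (isOpen_iUnion (fun R => isOpen_agreeBall _ _)).preimage continuous_subtype_val
  have hEopen : ∀ R, IsOpen (Eset R) := by
    intro R
    have : Eset R = Subtype.val ⁻¹' ({node hF hC hCF hne (insert 0 R)}ᶜ) := rfl
    rw [this]
    exact ((isClosed_singleton_hyper _).isOpen_compl).preimage continuous_subtype_val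
  -- a generic step: any nonempty open subset of the domain contains a node extension
  have hstep : ∀ (U : Set ↥𝒟), IsOpen U → U.Nonempty →
      ∃ (B₀ : ℕ) (R : Finset ℕ), 0 ∈ R ∧
        ∀ R' : Finset ℕ, 0 ∈ R' → Agree B₀ (LSet C ↑R) (LSet C ↑R') →
          ∃ hd : node hF hC hCF hne R' ∈ 𝒟, (⟨node hF hC hCF hne R', hd⟩ : ↥𝒟) ∈ U := by
    intro U hU hUne
    obtain ⟨t, htopen, htpre⟩ := isOpen_induced_iff.mp hU
    obtain ⟨x, hxU⟩ := hUne
    have hxt : x.1 ∈ t := by rw [← htpre] at hxU; exact hxU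
    obtain ⟨B₀, hB₀⟩ := exists_hball_subset htopen hxt
    obtain ⟨R, h0R, hagR⟩ := exists_node_near hF hC hCF hne x.2 B₀
    refine ⟨B₀, R, h0R, fun R' h0R' hag' => ?_⟩
    have hdom : node hF hC hCF hne R' ∈ 𝒟 := subset_closure ⟨R', h0R', rfl⟩
    refine ⟨hdom, ?_⟩
    have hmem : node hF hC hCF hne R' ∈ t := by
      apply hB₀
      show Agree B₀ (shadow x.1) (shadow (node hF hC hCF hne R'))
      rw [shadow_node]
      exact hagR.trans hag'
    rw [← htpre]
    exact hmem
  have hDdense : ∀ n, Dense (Dset n) := by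
    intro n
    rw [dense_iff_inter_open]
    intro U hU hUne
    obtain ⟨B₀, R, h0R, hext⟩ := hstep U hU hUne
    set M := max B₀ n + 1 with hM
    set R' : Finset ℕ := insert M R with hR'
    have h0R' : 0 ∈ R' := Finset.mem_insert_of_mem h0R
    have hag : Agree B₀ (LSet C ↑R) (LSet C ↑R') := by
      apply LSet_agree
      intro i hi
      simp only [hR', Finset.coe_insert, Set.mem_insert_iff, Finset.mem_coe]
      constructor
      · intro hiR; exact Or.inr hiR
      · rintro (rfl | hiR)
        · omega
        · exact hiR
    obtain ⟨hd, hmem⟩ := hext R' h0R' hag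
    refine ⟨⟨node hF hC hCF hne R', hd⟩, hmem, ?_⟩
    refine ⟨R', h0R', ?_, ?_⟩
    · have : M ≤ R'.sup id := Finset.le_sup (f := id) (Finset.mem_insert_self M R)
      omega
    · rw [shadow_node]
      exact Agree.refl _ _
  have hEdense : ∀ R₀ : Finset ℕ, Dense (Eset R₀) := by
    intro R₀
    rw [dense_iff_inter_open]
    intro U hU hUne
    obtain ⟨B₀, R, h0R, hext⟩ := hstep U hU hUne
    set R₁ : Finset ℕ := insert 0 R₀ with hR₁
    by_cases hcase : node hF hC hCF hne R = node hF hC hCF hne R₁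
    · -- must find a different extension
      have h0R₁ : 0 ∈ R₁ := Finset.mem_insert_self 0 R₀
      have hLeq : LSet C ↑R = LSet C ↑R₁ := by
        have := congrArg shadow hcase
        rwa [shadow_node, shadow_node] at this
      by_cases hS : ∃ S : Finset ℕ, (∀ m ∈ S, B₀ ≤ m) ∧
          node hF hC hCF hne (R₁ ∪ S) ≠ node hF hC hCF hne R₁
      · obtain ⟨S, hSlarge, hSne⟩ := hS
        have h0RS : 0 ∈ R₁ ∪ S := Finset.mem_union_left S h0R₁
        have hag : Agree B₀ (LSet C ↑R) (LSet C ↑(R₁ ∪ S)) := by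
          rw [hLeq]
          apply LSet_agree
          intro i hi
          simp only [Finset.coe_union, Set.mem_union, Finset.mem_coe]
          constructor
          · intro hiR; exact Or.inl hiR
          · rintro (hiR | hiS)
            · exact hiR
            · exact absurd (hSlarge i hiS) (by omega)
        obtain ⟨hd, hmem⟩ := hext (R₁ ∪ S) h0RS hag
        exact ⟨⟨node hF hC hCF hne (R₁ ∪ S), hd⟩, hmem, hSne⟩
      · -- otherwise we get an infinite good block structure: contradiction
        exfalso
        push_neg at hS
        set Rinf : Set ℕ := ↑R₁ ∪ {m | B₀ ≤ m} with hRinfdef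
        have hinf : Rinf.Infinite :=
          Set.Infinite.mono Set.subset_union_right (Set.Ici_infinite B₀)
        have h0inf : 0 ∈ Rinf := Set.mem_union_left _ (by exact_mod_cast h0R₁)
        apply hbad Rinf hinf h0inf
        have heq : LSet C Rinf = LSet C ↑R₁ := by
          apply eq_of_agree_all (LSet_isClosed C hC _) (LSet_isClosed C hC _)
          intro B
          set B' := max B B₀ with hB'
          set S : Finset ℕ := Finset.Ico B₀ B' with hSdef
          have hSL : node hF hC hCF hne (R₁ ∪ S) = node hF hC hCF hne R₁ :=
            hS S (fun m hm => (Finset.mem_Ico.mp hm).1)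
          have hLS : LSet C ↑(R₁ ∪ S) = LSet C ↑R₁ := by
            have := congrArg shadow hSL
            rwa [shadow_node, shadow_node] at this
          have hagree : Agree B' (LSet C Rinf) (LSet C ↑(R₁ ∪ S)) := by
            apply LSet_agree
            intro i hi
            simp only [hRinfdef, Set.mem_union, Set.mem_setOf_eq, Finset.coe_union,
              Finset.mem_coe, Finset.mem_Ico, hSdef]
            constructor
            · rintro (hiR | hiB)
              · exact Or.inl hiR
              · exact Or.inr ⟨hiB, hi⟩
            · rintro (hiR | ⟨hiB, _⟩)
              · exact Or.inl hiR
              · exact Or.inr hiB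
          rw [hLS] at hagree
          exact hagree.mono (le_max_left B B₀)
        rw [heq]
        exact LSet_subset_F C hF hCF R₁.finite_toSet
    · -- the found node itself works
      have hag : Agree B₀ (LSet C ↑R) (LSet C ↑R) := Agree.refl _ _
      obtain ⟨hd, hmem⟩ := hext R h0R hag
      exact ⟨⟨node hF hC hCF hne R, hd⟩, hmem, hcase⟩
  -- apply the Baire property
  set f : ℕ ⊕ Finset ℕ → Set ↥𝒟 := Sum.elim Dset Eset with hf
  have hfopen : ∀ i, IsOpen (f i) := by rintro (n | R); exacts [hDopen n, hEopen R]
  have hfdense : ∀ i, Dense (f i) := by rintro (n | R); exacts [hDdense n, hEdense R]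
  have hdense : Dense (⋂ i, f i) := dense_iInter_of_isOpen hfopen hfdense
  have hDomne : Nonempty ↥𝒟 :=
    ⟨⟨node hF hC hCF hne {0}, subset_closure ⟨{0}, Finset.mem_singleton_self 0, rfl⟩⟩⟩
  obtain ⟨x, hx⟩ := hdense.nonempty
  have hxD : ∀ n, x ∈ Dset n := fun n => Set.mem_iInter.mp hx (Sum.inl n)
  have hxE : ∀ R, x ∈ Eset R := fun R => Set.mem_iInter.mp hx (Sum.inr R)
  -- extract the sequence of finite block structures
  choose Rseq h0seq hsupseq hagseq using hxD
  set χ : ℕ → Cantor := fun n => fun i => decide (i ∈ Rseq n) with hχ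
  obtain ⟨a, φ, hφ, hten⟩ := CompactSpace.tendsto_subseq χ
  have hcoord : ∀ i, ∀ᶠ j in Filter.atTop, χ (φ j) i = a i := by
    intro i
    have h1 : Filter.Tendsto (fun j => (χ ∘ φ) j i) Filter.atTop (nhds (a i)) :=
      ((continuous_apply i).continuousAt.tendsto).comp hten
    rw [nhds_discrete] at h1
    exact Filter.tendsto_pure.mp h1
  set Rstar : Set ℕ := {i | a i = true} with hRstar
  have h0star : 0 ∈ Rstar := by
    obtain ⟨j, hj⟩ := (hcoord 0).exists
    have : χ (φ j) 0 = true := decide_eq_true (h0seq (φ j))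
    rw [this] at hj
    exact hj.symm
  have hkey : ∀ B, Agree B (shadow x.1) (LSet C Rstar) := by
    intro B
    have hev : ∀ᶠ j in Filter.atTop, ∀ i ∈ Set.Iio B, χ (φ j) i = a i :=
      (Filter.eventually_all_finite (Set.finite_Iio B)).mpr (fun i _ => hcoord i)
    obtain ⟨j, hj1, hj2⟩ := (hev.and (Filter.eventually_ge_atTop B)).exists
    have hsup : B ≤ (Rseq (φ j)).sup id + 1 := by
      have h1 : φ j ≤ (Rseq (φ j)).sup id := hsupseq (φ j)
      have h2 : j ≤ φ j := hφ.le_apply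
      omega
    have h1 : Agree B (shadow x.1) (LSet C ↑(Rseq (φ j))) := (hagseq (φ j)).mono hsup
    have h2 : Agree B (LSet C ↑(Rseq (φ j))) (LSet C Rstar) := by
      apply LSet_agree
      intro i hi
      have := hj1 i hi
      rw [hχ] at this
      simp only at this
      rw [hRstar]
      simp only [Finset.mem_coe, Set.mem_setOf_eq]
      rw [← this]
      exact decide_eq_true_iff.symm
    exact h1.trans h2
  have hshadow : shadow x.1 = LSet C Rstar :=
    eq_of_agree_all (shadow_isClosed _) (LSet_isClosed C hC _) hkey
  rcases Rstar.finite_or_infinite with hfin | hinf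
  · set Rf := hfin.toFinset with hRf
    have hcoe : ↑Rf = Rstar := hfin.coe_toFinset
    have hxnode : x.1 = node hF hC hCF hne Rf := by
      apply shadow_inj
      rw [hshadow, shadow_node, hcoe]
    have h0Rf : 0 ∈ Rf := by
      rw [hRf, Set.Finite.mem_toFinset]
      exact h0star
    have := hxE (Rf.erase 0)
    rw [hEset] at this
    simp only [Set.mem_setOf_eq] at this
    rw [Finset.insert_erase h0Rf] at this
    exact this hxnode
  · exact hbad Rstar hinf h0star (hshadow ▸ shadow_subset x.1)

end Nodes

end SPF

/-- If the Vietoris hyperspace `K(F)` of a free filter `F` on `ℕ` (viewed as a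
subspace of the Cantor set `2^ℕ`) is hereditarily Baire, then `F` is a strong
`P`-filter. -/
theorem strongPFilter_of_hyperspace_hereditarilyBaire (F : Set Cantor)
    (hF : IsFreeFilter F) (h : HereditarilyBaire (Hyper ↥F)) :
    StrongPFilter F := by
  intro C hC
  by_cases hne : ∀ n, (C n).Nonempty
  · obtain ⟨R, hinf, h0R, hsub⟩ :=
      SPF.main_key hF (fun n => (hC n).1) (fun n => (hC n).2) hne h
    set k : ℕ → ℕ := fun j => Nat.nth (· ∈ R) j with hk
    have hset : setOf (· ∈ R) = R := rfl
    have hinf' : (setOf (· ∈ R)).Infinite := by rw [hset]; exact hinf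
    have hmono : StrictMono k := Nat.nth_strictMono hinf'
    have hk0 : k 0 = 0 := by
      show Nat.nth (· ∈ R) 0 = 0
      rw [Nat.nth_zero]
      exact Nat.sInf_eq_zero.mpr (Or.inl h0R)
    refine ⟨k, hk0, hmono, ?_⟩
    intro X hX Y hY
    apply hsub
    refine ⟨X, hX, ?_⟩
    intro n
    obtain ⟨hlo', hhi'⟩ := SPF.idx_spec hinf h0R n
    have hlo : k (SPF.idx R n) ≤ n := hlo'
    have hhi : n < k (SPF.idx R n + 1) := hhi'
    have huniq : ∀ j, k j ≤ n → n < k (j + 1) → j = SPF.idx R n := by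
      intro j hj1 hj2
      rcases lt_trichotomy j (SPF.idx R n) with hlt | heq | hgt
      · exfalso
        have hle : k (j + 1) ≤ k (SPF.idx R n) := hmono.monotone (by omega)
        omega
      · exact heq
      · exfalso
        have hle : k (SPF.idx R n + 1) ≤ k j := hmono.monotone (by omega)
        omega
    have hmem : Y n = true ↔ X (SPF.idx R n) n = true := by
      constructor
      · intro hYn
        have hn : n ∈ toSet Y := hYn
        rw [hY] at hn
        obtain ⟨j, hj⟩ := Set.mem_iUnion.mp hn
        have hju : j = SPF.idx R n := huniq j hj.2.1 hj.2.2
        rw [← hju]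
        exact hj.1
      · intro hXn
        have hn : n ∈ toSet Y := by
          rw [hY]
          exact Set.mem_iUnion.mpr ⟨SPF.idx R n, hXn, hlo, hhi⟩
        exact hn
    cases hYn : Y n <;> cases hXn : X (SPF.idx R n) n
    · rfl
    · simp [hYn, hXn] at hmem
    · simp [hYn, hXn] at hmem
    · rfl
  · push_neg at hne
    obtain ⟨n₀, hempty⟩ := hne
    refine ⟨fun n => n, rfl, strictMono_id, ?_⟩
    intro X hX Y _
    exact absurd (hX n₀) (by rw [hempty]; exact Set.notMem_empty _)
end
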